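/- arXiv:1609.06212 — 7 statements merged into one kernel-verified Lean document; each statement's English description precedes it below -/
import Mathlib

section
/- Let ρ > 0 and L ≥ 0, and let ξ : ℝ → ℝ be Lipschitz with constant L such that ρ ≤ 1 + ξ′(σ) for almost every σ ∈ ℝ; set x(s) = s + ξ(s) with inverse s(·), and define η(y) = s(y) − y. Then: (i) η(y) = −ξ(s(y)) for all y; (ii) sup_y |η(y)| = sup_σ |ξ(σ)|; (iii) η is Lipschitz with constant ρ⁻¹·L; (iv) ∫ η(y)² dy ≤ (1 + L)² ∫ ξ(σ)² dσ; and (v) ∫ η′(y)² dy ≤ ρ⁻¹ ∫ ξ′(σ)² dσ (where η′ denotes the almost-everywhere defined derivative of the Lipschitz function η). -/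
open MeasureTheory

open Set

theorem my_lintegral_cov {s : Set ℝ} {f f' : ℝ → ℝ} (hs : MeasurableSet s)
    (hf' : ∀ x ∈ s, HasDerivWithinAt f (f' x) s x) (hf : Set.InjOn f s) (g : ℝ → ENNReal) :
    ∫⁻ x in f '' s, g x = ∫⁻ x in s, ENNReal.ofReal |f' x| * g (f x) := by
  simpa only [ContinuousLinearMap.det_toSpanSingleton] using
    lintegral_image_eq_lintegral_abs_det_fderiv_mul volume hs
      (fun x hx => (hf' x hx).hasFDerivWithinAt) hf g

theorem my_lip_null {f : ℝ → ℝ} {K : NNReal} (hf : LipschitzWith K f) {s : Set ℝ}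
    (hs : volume s = 0) : volume (f '' s) = 0 := by
  have h := hf.hausdorffMeasure_image_le (d := 1) zero_le_one s
  rw [MeasureTheory.hausdorffMeasure_real] at h
  rw [← le_zero_iff]
  calc volume (f '' s) ≤ (K : ENNReal) ^ (1:ℝ) * volume s := h
  _ = 0 := by rw [hs, mul_zero]

/-- Properties of the inverse displacement `η(y) = s(y) − y` of the
deformation `x(s) = s + ξ(s)`: the identity `η = −ξ ∘ s`, equality of sup norms,
the Lipschitz bound with constant `ρ⁻¹·L`, and the `L²` bounds for `η` and `η'`. -/
theorem stmt_5 (ρ L : ℝ) (hρ : 0 < ρ) (hL : 0 ≤ L) (ξ ξ' : ℝ → ℝ)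
    (hlip : ∀ a b : ℝ, |ξ a - ξ b| ≤ L * |a - b|)
    (hderiv : ∀ᵐ σ ∂volume, HasDerivAt ξ (ξ' σ) σ)
    (hlow : ∀ᵐ σ ∂volume, ρ ≤ 1 + ξ' σ)
    (x sInv : ℝ → ℝ) (hx : ∀ s, x s = s + ξ s)
    (hinv₁ : ∀ σ, sInv (x σ) = σ) (hinv₂ : ∀ y, x (sInv y) = y)
    (η η' : ℝ → ℝ) (hη : ∀ y, η y = sInv y - y)
    (hηderiv : ∀ᵐ y ∂volume, HasDerivAt η (η' y) y) :
    (∀ y, η y = -ξ (sInv y)) ∧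
    ((⨆ y, |η y|) = ⨆ σ, |ξ σ|) ∧
    (∀ y₁ y₂ : ℝ, |η y₁ - η y₂| ≤ ρ⁻¹ * L * |y₁ - y₂|) ∧
    ((∫ y, (η y) ^ 2) ≤ (1 + L) ^ 2 * ∫ σ, (ξ σ) ^ 2) ∧
    ((∫ y, (η' y) ^ 2) ≤ ρ⁻¹ * ∫ σ, (ξ' σ) ^ 2) := by
  -- part (i)
  have hηξ : ∀ y, η y = -ξ (sInv y) := by
    intro y
    have h2 := hinv₂ y
    rw [hx] at h2
    rw [hη]; linarith
  -- basic facts about x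
  have hxinj : Function.Injective x := by
    intro a b h
    rw [← hinv₁ a, h, hinv₁]
  have hξcont : Continuous ξ := by
    have : LipschitzWith ⟨L, hL⟩ ξ := by
      apply LipschitzWith.of_dist_le_mul
      intro a b; rw [Real.dist_eq, Real.dist_eq]; exact hlip a b
    exact this.continuous
  have hxcont : Continuous x := by
    have : x = fun s => s + ξ s := funext hx
    rw [this]; exact continuous_id.add hξcont
  have hxlipR : ∀ a b : ℝ, |x a - x b| ≤ (1 + L) * |a - b| := by
    intro a b
    rw [hx, hx]
    have h1 : a + ξ a - (b + ξ b) = (a - b) + (ξ a - ξ b) := by ring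
    rw [h1]
    calc |a - b + (ξ a - ξ b)| ≤ |a - b| + |ξ a - ξ b| := abs_add_le _ _
    _ ≤ |a - b| + L * |a - b| := by linarith [hlip a b]
    _ = (1 + L) * |a - b| := by ring
  have hxlip : LipschitzWith ⟨1 + L, by linarith⟩ x := by
    apply LipschitzWith.of_dist_le_mul
    intro a b; rw [Real.dist_eq, Real.dist_eq]; exact hxlipR a b
  -- the good set A
  set A : Set ℝ := {σ | HasDerivAt ξ (ξ' σ) σ ∧ ρ ≤ 1 + ξ' σ} with hA
  have hAnull : volume Aᶜ = 0 := by
    have := hderiv.and hlow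
    rwa [MeasureTheory.ae_iff] at this
  -- derivative bound from Lipschitz
  have hbd : ∀ σ, HasDerivAt ξ (ξ' σ) σ → |ξ' σ| ≤ L := by
    intro σ h
    rw [hasDerivAt_iff_tendsto_slope] at h
    have habs : Filter.Tendsto (fun z => |slope ξ σ z|) (nhdsWithin σ {σ}ᶜ) (nhds |ξ' σ|) :=
      (continuous_abs.tendsto _).comp h
    refine le_of_tendsto habs ?_
    filter_upwards [self_mem_nhdsWithin] with z hz
    have hz' : z - σ ≠ 0 := sub_ne_zero.mpr hz
    rw [slope_def_field, div_eq_mul_inv, abs_mul, abs_inv, ← div_eq_mul_inv,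
      div_le_iff₀ (abs_pos.mpr hz')]
    exact hlip z σ
  -- x has derivative 1 + ξ' on A
  have hxA : ∀ σ ∈ A, HasDerivAt x (1 + ξ' σ) σ := by
    intro σ hσ
    have h1 : HasDerivAt (fun s => s + ξ s) (1 + ξ' σ) σ := (hasDerivAt_id σ).add hσ.1
    have hxe : x = fun s => s + ξ s := funext hx
    rw [hxe]; exact h1
  -- key antilipschitz estimate
  have key' : ∀ a b : ℝ, b ≤ a → ρ * (a - b) ≤ |x a - x b| := by
    intro a b hba
    set D : Set ℝ := (toMeasurable volume Aᶜ)ᶜ with hD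
    have hDmeas : MeasurableSet D := (measurableSet_toMeasurable _ _).compl
    have hDnull : volume Dᶜ = 0 := by
      rw [hD, compl_compl, measure_toMeasurable]; exact hAnull
    have hDsub : D ⊆ A := by
      intro σ hσ
      by_contra hc
      exact hσ (subset_toMeasurable _ _ hc)
    set s : Set ℝ := Icc b a ∩ D with hs
    have hms : MeasurableSet s := measurableSet_Icc.inter hDmeas
    have hf' : ∀ σ ∈ s, HasDerivWithinAt x (1 + ξ' σ) s σ :=
      fun σ hσ => (hxA σ (hDsub hσ.2)).hasDerivWithinAt
    have hcov := my_lintegral_cov hms hf' hxinj.injOn 1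
    simp only [Pi.one_apply, mul_one, setLIntegral_one] at hcov
    -- upper bound for the image measure
    have himg : x '' s ⊆ uIcc (x b) (x a) := by
      rcases hxcont.strictMono_of_inj hxinj with hm | han
      · rintro _ ⟨σ, hσ, rfl⟩
        exact mem_uIcc.mpr (Or.inl ⟨hm.monotone hσ.1.1, hm.monotone hσ.1.2⟩)
      · rintro _ ⟨σ, hσ, rfl⟩
        exact mem_uIcc.mpr (Or.inr ⟨han.antitone hσ.1.2, han.antitone hσ.1.1⟩)
    have hub : volume (x '' s) ≤ ENNReal.ofReal |x a - x b| := by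
      calc volume (x '' s) ≤ volume (uIcc (x b) (x a)) := measure_mono himg
      _ = ENNReal.ofReal |x a - x b| := Real.volume_interval
    -- lower bound
    have hlb : ENNReal.ofReal (ρ * (a - b)) ≤ volume (x '' s) := by
      rw [hcov]
      have h1 : ∫⁻ _ in s, ENNReal.ofReal ρ ∂volume ≤ ∫⁻ σ in s, ENNReal.ofReal |1 + ξ' σ| ∂volume := by
        refine setLIntegral_mono' hms fun σ hσ => ?_
        have h2 := (hDsub hσ.2).2
        apply ENNReal.ofReal_le_ofReal
        rw [abs_of_pos (lt_of_lt_of_le hρ h2)]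
        exact h2
      refine le_trans ?_ h1
      rw [setLIntegral_const]
      have hvs : volume s = ENNReal.ofReal (a - b) := by
        rw [hs, measure_inter_conull hDnull, Real.volume_Icc]
      rw [hvs, ← ENNReal.ofReal_mul hρ.le]
    have := le_trans hlb hub
    exact (ENNReal.ofReal_le_ofReal_iff (abs_nonneg _)).mp this
  have key : ∀ a b : ℝ, ρ * |a - b| ≤ |x a - x b| := by
    intro a b
    rcases le_total b a with h | h
    · rw [abs_of_nonneg (by linarith : (0:ℝ) ≤ a - b)]; exact key' a b h
    · rw [abs_sub_comm a b, abs_of_nonneg (by linarith : (0:ℝ) ≤ b - a), abs_sub_comm (x a)]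
      exact key' b a h
  -- sInv is Lipschitz
  have hsInvR : ∀ y₁ y₂ : ℝ, |sInv y₁ - sInv y₂| ≤ ρ⁻¹ * |y₁ - y₂| := by
    intro y₁ y₂
    have h1 := key (sInv y₁) (sInv y₂)
    rw [hinv₂, hinv₂] at h1
    rw [inv_mul_eq_div, le_div_iff₀ hρ, mul_comm]
    exact h1
  
  have hsInvLip : LipschitzWith ⟨ρ⁻¹, by positivity⟩ sInv := by
    apply LipschitzWith.of_dist_le_mul
    intro a b; rw [Real.dist_eq, Real.dist_eq]; exact hsInvR a b
  have hsInvCont : Continuous sInv := hsInvLip.continuous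
  have hηcont : Continuous η := by
    have h1 : η = fun y => sInv y - y := funext hη
    rw [h1]; exact hsInvCont.sub continuous_id
  -- part (ii)
  have part2 : (⨆ y, |η y|) = ⨆ σ, |ξ σ| := by
    have hrange : (Set.range fun y => |η y|) = Set.range fun σ => |ξ σ| := by
      ext r
      simp only [Set.mem_range]
      constructor
      · rintro ⟨y, rfl⟩
        exact ⟨sInv y, by rw [hηξ, abs_neg]⟩
      · rintro ⟨σ, rfl⟩
        exact ⟨x σ, by rw [hηξ, hinv₁, abs_neg]⟩
    rw [← sSup_range, ← sSup_range, hrange]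
  -- part (iii)
  have part3 : ∀ y₁ y₂ : ℝ, |η y₁ - η y₂| ≤ ρ⁻¹ * L * |y₁ - y₂| := by
    intro y₁ y₂
    rw [hηξ, hηξ]
    have h1 : -ξ (sInv y₁) - -ξ (sInv y₂) = ξ (sInv y₂) - ξ (sInv y₁) := by ring
    rw [h1]
    calc |ξ (sInv y₂) - ξ (sInv y₁)| ≤ L * |sInv y₂ - sInv y₁| := hlip _ _
    _ ≤ L * (ρ⁻¹ * |y₂ - y₁|) := by
        have h2 := hsInvR y₂ y₁
        nlinarith [abs_nonneg (sInv y₂ - sInv y₁)]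
    _ = ρ⁻¹ * L * |y₁ - y₂| := by rw [abs_sub_comm]; ring
  -- measurable conull subsets
  have mkD : ∀ S : Set ℝ, volume Sᶜ = 0 →
      ∃ D : Set ℝ, MeasurableSet D ∧ volume Dᶜ = 0 ∧ D ⊆ S := by
    intro S hS
    refine ⟨(toMeasurable volume Sᶜ)ᶜ, (measurableSet_toMeasurable _ _).compl, ?_, ?_⟩
    · rw [compl_compl, measure_toMeasurable]; exact hS
    · intro σ hσ; by_contra hc; exact hσ (subset_toMeasurable _ _ hc)
  -- change of variables
  have cov : ∀ (D : Set ℝ), MeasurableSet D → volume Dᶜ = 0 → D ⊆ A →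
      ∀ g : ℝ → ENNReal, ∫⁻ y, g y = ∫⁻ σ in D, ENNReal.ofReal (1 + ξ' σ) * g (x σ) := by
    intro D hDm hDn hDs g
    have hf' : ∀ σ ∈ D, HasDerivWithinAt x (1 + ξ' σ) D σ :=
      fun σ hσ => (hxA σ (hDs hσ)).hasDerivWithinAt
    have hcov := my_lintegral_cov hDm hf' hxinj.injOn g
    have habs : ∫⁻ σ in D, ENNReal.ofReal |1 + ξ' σ| * g (x σ) ∂volume
        = ∫⁻ σ in D, ENNReal.ofReal (1 + ξ' σ) * g (x σ) ∂volume := by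
      refine setLIntegral_congr_fun hDm (fun σ hσ => ?_)
      rw [abs_of_pos (lt_of_lt_of_le hρ (hDs hσ).2)]
    have himgfull : volume (x '' D)ᶜ = 0 := by
      have hsub2 : (x '' D)ᶜ ⊆ x '' Dᶜ := by
        intro y hy
        refine ⟨sInv y, ?_, hinv₂ y⟩
        intro hc
        exact hy ⟨sInv y, hc, hinv₂ y⟩
      exact measure_mono_null hsub2 (my_lip_null hxlip hDn)
    have hrestr : volume.restrict (x '' D) = volume := by
      apply Measure.restrict_eq_self_of_ae_mem
      rw [MeasureTheory.ae_iff]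
      exact himgfull
    calc ∫⁻ y, g y = ∫⁻ y in x '' D, g y := by rw [hrestr]
    _ = ∫⁻ σ in D, ENNReal.ofReal |1 + ξ' σ| * g (x σ) ∂volume := hcov
    _ = _ := habs
  -- the standard good set D
  obtain ⟨D, hDm, hDn, hDs⟩ := mkD A hAnull
  have hDrestr : volume.restrict D = volume := by
    apply Measure.restrict_eq_self_of_ae_mem
    rw [MeasureTheory.ae_iff]
    exact hDn
  -- part (iv)
  have hmξ2 : AEStronglyMeasurable (fun σ => ξ σ ^ 2) volume := (hξcont.pow 2).aestronglyMeasurable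
  have hmη2 : AEStronglyMeasurable (fun y => η y ^ 2) volume := (hηcont.pow 2).aestronglyMeasurable
  have hiξ : ∫ σ, ξ σ ^ 2 = (∫⁻ σ, ENNReal.ofReal (ξ σ ^ 2)).toReal :=
    integral_eq_lintegral_of_nonneg_ae (Filter.Eventually.of_forall fun σ => sq_nonneg _) hmξ2
  have hiη : ∫ y, η y ^ 2 = (∫⁻ y, ENNReal.ofReal (η y ^ 2)).toReal :=
    integral_eq_lintegral_of_nonneg_ae (Filter.Eventually.of_forall fun y => sq_nonneg _) hmη2
  set F := ∫⁻ σ, ENNReal.ofReal (ξ σ ^ 2) with hF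
  set G := ∫⁻ y, ENNReal.ofReal (η y ^ 2) with hG
  have hFD : F = ∫⁻ σ in D, ENNReal.ofReal (ξ σ ^ 2) := by rw [hF, hDrestr]
  have hGF : G = ∫⁻ σ in D, ENNReal.ofReal (1 + ξ' σ) * ENNReal.ofReal (ξ σ ^ 2) := by
    rw [hG, cov D hDm hDn hDs (fun y => ENNReal.ofReal (η y ^ 2))]
    refine setLIntegral_congr_fun hDm (fun σ hσ => ?_)
    congr 2
    rw [hηξ, hinv₁, neg_sq]
  have hFG1 : G ≤ ENNReal.ofReal (1 + L) * F := by
    rw [hGF, hFD, ← lintegral_const_mul' _ _ ENNReal.ofReal_ne_top]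
    refine setLIntegral_mono' hDm fun σ hσ => ?_
    have h2 : ξ' σ ≤ L := le_trans (le_abs_self _) (hbd σ (hDs hσ).1)
    exact mul_le_mul_left (ENNReal.ofReal_le_ofReal (by linarith)) _
  have hFG2 : ENNReal.ofReal ρ * F ≤ G := by
    rw [hGF, hFD, ← lintegral_const_mul' _ _ ENNReal.ofReal_ne_top]
    refine setLIntegral_mono' hDm fun σ hσ => ?_
    exact mul_le_mul_left (ENNReal.ofReal_le_ofReal (hDs hσ).2) _
  have part4 : (∫ y, η y ^ 2) ≤ (1 + L) ^ 2 * ∫ σ, ξ σ ^ 2 := by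
    by_cases hFfin : F = ⊤
    · have hGtop : G = ⊤ := by
        rw [hFfin, ENNReal.mul_top (by simpa using hρ)] at hFG2
        exact top_le_iff.mp hFG2
      rw [hiη, hiξ, hGtop, hFfin]
      simp
    · rw [hiη, hiξ]
      have h1 : G.toReal ≤ (1 + L) * F.toReal := by
        have h2 := ENNReal.toReal_mono (ENNReal.mul_ne_top ENNReal.ofReal_ne_top hFfin) hFG1
        rwa [ENNReal.toReal_mul, ENNReal.toReal_ofReal (by linarith)] at h2
      have h0 : 0 ≤ F.toReal := ENNReal.toReal_nonneg
      nlinarith [mul_nonneg (mul_nonneg hL hL) h0, mul_nonneg hL h0]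
  -- part (v)
  have hBnull : volume {y | ¬ HasDerivAt η (η' y) y} = 0 := by
    rw [← MeasureTheory.ae_iff]; exact hηderiv
  have hA'null : volume (A ∩ {σ | HasDerivAt η (η' (x σ)) (x σ)})ᶜ = 0 := by
    rw [Set.compl_inter]
    refine measure_union_null hAnull ?_
    have hsub : {σ | HasDerivAt η (η' (x σ)) (x σ)}ᶜ ⊆ sInv '' {y | ¬ HasDerivAt η (η' y) y} :=
      fun σ hσ => ⟨x σ, hσ, hinv₁ σ⟩
    exact measure_mono_null hsub (my_lip_null hsInvLip hBnull)
  obtain ⟨D', hD'm, hD'n, hD's⟩ := mkD _ hA'null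
  have hD'A : D' ⊆ A := fun σ hσ => (hD's hσ).1
  have hD'restr : volume.restrict D' = volume := by
    apply Measure.restrict_eq_self_of_ae_mem
    rw [MeasureTheory.ae_iff]
    exact hD'n
  have hηd : ∀ σ ∈ D', η' (x σ) = (1 + ξ' σ)⁻¹ - 1 := by
    intro σ hσ
    obtain ⟨⟨hξd, hρd⟩, hηdd⟩ := hD's hσ
    have hpos : 0 < 1 + ξ' σ := lt_of_lt_of_le hρ hρd
    have h1 : HasDerivAt sInv (1 + ξ' σ)⁻¹ (x σ) := by
      refine HasDerivAt.of_local_left_inverse hsInvCont.continuousAt ?_ hpos.ne'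
        (Filter.Eventually.of_forall hinv₂)
      rw [hinv₁]
      exact hxA σ ⟨hξd, hρd⟩
    have h2 : HasDerivAt η ((1 + ξ' σ)⁻¹ - 1) (x σ) := by
      have h3 := h1.sub (hasDerivAt_id (x σ))
      have hηe : η = fun y => sInv y - y := funext hη
      rw [hηe]
      exact h3
    exact hηdd.unique h2
  -- measurability of ξ' and η'
  have hmξ' : AEMeasurable ξ' volume := by
    have h1 : deriv ξ =ᵐ[volume] ξ' := by
      filter_upwards [hderiv] with σ h using h.deriv
    exact (measurable_deriv ξ).aemeasurable.congr h1
  have hmη' : AEMeasurable η' volume := by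
    have h1 : deriv η =ᵐ[volume] η' := by
      filter_upwards [hηderiv] with y h using h.deriv
    exact (measurable_deriv η).aemeasurable.congr h1
  have hmξ'2 : AEStronglyMeasurable (fun σ => ξ' σ ^ 2) volume :=
    (hmξ'.pow_const 2).aestronglyMeasurable
  have hmη'2 : AEStronglyMeasurable (fun y => η' y ^ 2) volume :=
    (hmη'.pow_const 2).aestronglyMeasurable
  have hiξ' : ∫ σ, ξ' σ ^ 2 = (∫⁻ σ, ENNReal.ofReal (ξ' σ ^ 2)).toReal :=
    integral_eq_lintegral_of_nonneg_ae (Filter.Eventually.of_forall fun σ => sq_nonneg _) hmξ'2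
  have hiη' : ∫ y, η' y ^ 2 = (∫⁻ y, ENNReal.ofReal (η' y ^ 2)).toReal :=
    integral_eq_lintegral_of_nonneg_ae (Filter.Eventually.of_forall fun y => sq_nonneg _) hmη'2
  set F' := ∫⁻ σ, ENNReal.ofReal (ξ' σ ^ 2) with hF'
  set G' := ∫⁻ y, ENNReal.ofReal (η' y ^ 2) with hG'
  have hF'D : F' = ∫⁻ σ in D', ENNReal.ofReal (ξ' σ ^ 2) := by rw [hF', hD'restr]
  have hG'eq : G' = ∫⁻ σ in D', ENNReal.ofReal (ξ' σ ^ 2 / (1 + ξ' σ)) := by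
    rw [hG', cov D' hD'm hD'n hD'A (fun y => ENNReal.ofReal (η' y ^ 2))]
    refine setLIntegral_congr_fun hD'm (fun σ hσ => ?_)
    have hpos : 0 < 1 + ξ' σ := lt_of_lt_of_le hρ (hD'A hσ).2
    rw [hηd σ hσ, ← ENNReal.ofReal_mul hpos.le]
    congr 1
    field_simp
    ring
  have hF'G1 : G' ≤ ENNReal.ofReal ρ⁻¹ * F' := by
    rw [hG'eq, hF'D, ← lintegral_const_mul' _ _ ENNReal.ofReal_ne_top]
    refine setLIntegral_mono' hD'm fun σ hσ => ?_
    have hρd := (hD'A hσ).2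
    have hpos : 0 < 1 + ξ' σ := lt_of_lt_of_le hρ hρd
    rw [← ENNReal.ofReal_mul (by positivity)]
    apply ENNReal.ofReal_le_ofReal
    rw [inv_mul_eq_div]
    exact div_le_div_of_nonneg_left (sq_nonneg _) hρ hρd
  have hF'G2 : F' ≤ ENNReal.ofReal (1 + L) * G' := by
    rw [hG'eq, hF'D, ← lintegral_const_mul' _ _ ENNReal.ofReal_ne_top]
    refine setLIntegral_mono' hD'm fun σ hσ => ?_
    have hL2 : ξ' σ ≤ L := le_trans (le_abs_self _) (hbd σ (hD'A hσ).1)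
    have hpos : 0 < 1 + ξ' σ := lt_of_lt_of_le hρ (hD'A hσ).2
    rw [← ENNReal.ofReal_mul (by linarith)]
    apply ENNReal.ofReal_le_ofReal
    rw [← mul_div_assoc, le_div_iff₀ hpos]
    nlinarith [sq_nonneg (ξ' σ)]
  have part5 : (∫ y, η' y ^ 2) ≤ ρ⁻¹ * ∫ σ, ξ' σ ^ 2 := by
    by_cases hF'fin : F' = ⊤
    · have hG'top : G' = ⊤ := by
        by_contra hc
        have h1 : F' ≠ ⊤ := ne_top_of_le_ne_top
          (ENNReal.mul_ne_top ENNReal.ofReal_ne_top hc) hF'G2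
        exact h1 hF'fin
      rw [hiη', hiξ', hG'top, hF'fin]
      simp
    · rw [hiη', hiξ']
      have h2 := ENNReal.toReal_mono (ENNReal.mul_ne_top ENNReal.ofReal_ne_top hF'fin) hF'G1
      rwa [ENNReal.toReal_mul, ENNReal.toReal_ofReal (by positivity)] at h2
  exact ⟨hηξ, part2, part3, part4, part5⟩
end

section
/- Let ρ > 0 and, for j = 1, 2, let ξⱼ : ℝ → ℝ be Lipschitz such that ρ ≤ 1 + ξⱼ′(σ) for almost every σ ∈ ℝ; set xⱼ(s) = s + ξⱼ(s) with inverse sⱼ(·). Then for almost every y ∈ ℝ, both inverses are differentiable at y and |s₁′(y) − s₂′(y)| ≤ ρ⁻²·|ξ₁′(s₁(y)) − ξ₂′(s₂(y))|. -/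
open MeasureTheory Filter Set

lemma stmt8_aux (ρ L : ℝ) (hρ : 0 < ρ) (hL : 0 ≤ L) (ξ ξ' : ℝ → ℝ)
    (hlip : ∀ a b : ℝ, |ξ a - ξ b| ≤ L * |a - b|)
    (hderiv : ∀ᵐ σ ∂volume, HasDerivAt ξ (ξ' σ) σ)
    (hlow : ∀ᵐ σ ∂volume, ρ ≤ 1 + ξ' σ)
    (s : ℝ → ℝ) (hinv : ∀ σ, s (σ + ξ σ) = σ) (hinv' : ∀ y, s y + ξ (s y) = y) :
    ∀ᵐ y ∂volume, HasDerivAt s (1 + ξ' (s y))⁻¹ y ∧ ρ ≤ 1 + ξ' (s y) := by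
  set x : ℝ → ℝ := fun σ => σ + ξ σ with hx
  have hxlip : LipschitzWith ⟨1 + L, by linarith⟩ x := by
    apply LipschitzWith.of_dist_le_mul
    intro a b
    simp only [Real.dist_eq, hx]
    have := hlip a b
    have h2 : |a + ξ a - (b + ξ b)| ≤ |a - b| + |ξ a - ξ b| := by
      have := abs_add_le (a - b) (ξ a - ξ b); rw [show a + ξ a - (b + ξ b) = a - b + (ξ a - ξ b) by ring]; exact this
    calc |a + ξ a - (b + ξ b)| ≤ |a - b| + L * |a - b| := by linarith
    _ = (⟨1 + L, by linarith⟩ : NNReal) * |a - b| := by push_cast; ring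
  have hxc : Continuous x := hxlip.continuous
  have hxinj : Function.Injective x := Function.LeftInverse.injective hinv
  have hxsurj : Function.Surjective x := fun y => ⟨s y, hinv' y⟩
  -- x is strictly monotone
  have hmono : StrictMono x := by
    rcases hxc.strictMono_of_inj hxinj with h | h
    · exact h
    · exfalso
      obtain ⟨σ₀, hd, hl⟩ : ∃ σ₀, HasDerivAt ξ (ξ' σ₀) σ₀ ∧ ρ ≤ 1 + ξ' σ₀ := by
        have := (hderiv.and hlow).exists
        exact this
      have hdx : HasDerivAt x (1 + ξ' σ₀) σ₀ := by
        exact (hasDerivAt_id' σ₀).add hd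
      have hslope := hasDerivAt_iff_tendsto_slope.mp hdx
      have hpos : (0:ℝ) < 1 + ξ' σ₀ := lt_of_lt_of_le hρ hl
      have hev : ∀ᶠ τ in nhdsWithin σ₀ {σ₀}ᶜ, 0 < slope x σ₀ τ :=
        hslope (Ioi_mem_nhds hpos)
      have hev' : ∀ᶠ τ in nhdsWithin σ₀ (Ioi σ₀), 0 < slope x σ₀ τ :=
        hev.filter_mono (nhdsWithin_mono _ (fun τ hτ => ne_of_gt hτ))
      obtain ⟨τ, hτpos, hτgt⟩ := (hev'.and self_mem_nhdsWithin).exists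
      have hlt : x τ < x σ₀ := h hτgt
      rw [slope_def_field] at hτpos
      have : (x τ - x σ₀) / (τ - σ₀) < 0 :=
        div_neg_of_neg_of_pos (by linarith) (by linarith)
      linarith
  -- s is monotone and continuous
  have hsmono : Monotone s := by
    intro y₁ y₂ hy
    by_contra hc
    push_neg at hc
    have := hmono hc
    have e1 : x (s y₂) = y₂ := hinv' y₂
    have e2 : x (s y₁) = y₁ := hinv' y₁
    rw [e1, e2] at this
    linarith
  have hssurj : Function.Surjective s := fun σ => ⟨x σ, hinv σ⟩
  have hsc : Continuous s := hsmono.continuous_of_surjective hssurj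
  -- a.e. y, s y is a good point
  set N : Set ℝ := {σ | ¬ (HasDerivAt ξ (ξ' σ) σ ∧ ρ ≤ 1 + ξ' σ)} with hN
  have hNnull : volume N = 0 := by
    have := hderiv.and hlow
    rwa [MeasureTheory.ae_iff] at this
  have himg : volume (x '' N) = 0 := by
    have h1 : LipschitzOnWith ⟨1 + L, by linarith⟩ x N := hxlip.lipschitzOnWith
    have h2 := h1.hausdorffMeasure_image_le (zero_le_one)
    rw [MeasureTheory.hausdorffMeasure_real] at h2
    simp only [hNnull, mul_zero, ENNReal.rpow_one] at h2
    exact le_antisymm (by simpa using h2) zero_le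
  have hae : ∀ᵐ y ∂volume, s y ∉ N := by
    have hsub : {y | s y ∈ N} ⊆ x '' N := fun y hy => ⟨s y, hy, hinv' y⟩
    have : volume {y | s y ∈ N} = 0 :=
      le_antisymm (le_trans (measure_mono hsub) himg.le) zero_le
    rw [MeasureTheory.ae_iff]
    simpa using this
  filter_upwards [hae] with y hy
  rw [hN, Set.mem_setOf_eq, not_not] at hy
  obtain ⟨hd, hl⟩ := hy
  refine ⟨?_, hl⟩
  have hdx : HasDerivAt x (1 + ξ' (s y)) (s y) := by
    exact (hasDerivAt_id' (s y)).add hd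
  have hne : (1 + ξ' (s y)) ≠ 0 := by nlinarith
  exact HasDerivAt.of_local_left_inverse hsc.continuousAt hdx hne
    (Filter.Eventually.of_forall hinv')

/-- For two displacements `ξ₁, ξ₂`, the inverses `s₁, s₂` of
`xⱼ(s) = s + ξⱼ(s)` are differentiable a.e. with
`|s₁'(y) − s₂'(y)| ≤ ρ⁻²·|ξ₁'(s₁(y)) − ξ₂'(s₂(y))|`. -/
theorem stmt_8 (ρ L₁ L₂ : ℝ) (hρ : 0 < ρ) (hL₁ : 0 ≤ L₁) (hL₂ : 0 ≤ L₂)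
    (ξ₁ ξ₂ ξ₁' ξ₂' : ℝ → ℝ)
    (hlip₁ : ∀ a b : ℝ, |ξ₁ a - ξ₁ b| ≤ L₁ * |a - b|)
    (hlip₂ : ∀ a b : ℝ, |ξ₂ a - ξ₂ b| ≤ L₂ * |a - b|)
    (hderiv₁ : ∀ᵐ σ ∂volume, HasDerivAt ξ₁ (ξ₁' σ) σ)
    (hderiv₂ : ∀ᵐ σ ∂volume, HasDerivAt ξ₂ (ξ₂' σ) σ)
    (hlow₁ : ∀ᵐ σ ∂volume, ρ ≤ 1 + ξ₁' σ)
    (hlow₂ : ∀ᵐ σ ∂volume, ρ ≤ 1 + ξ₂' σ)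
    (s₁ s₂ : ℝ → ℝ)
    (hinv₁ : ∀ σ, s₁ (σ + ξ₁ σ) = σ) (hinv₁' : ∀ y, s₁ y + ξ₁ (s₁ y) = y)
    (hinv₂ : ∀ σ, s₂ (σ + ξ₂ σ) = σ) (hinv₂' : ∀ y, s₂ y + ξ₂ (s₂ y) = y) :
    ∀ᵐ y ∂volume, ∃ d₁ d₂ : ℝ, HasDerivAt s₁ d₁ y ∧ HasDerivAt s₂ d₂ y ∧
      |d₁ - d₂| ≤ ρ⁻¹ ^ 2 * |ξ₁' (s₁ y) - ξ₂' (s₂ y)| := by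
  have h₁ := stmt8_aux ρ L₁ hρ hL₁ ξ₁ ξ₁' hlip₁ hderiv₁ hlow₁ s₁ hinv₁ hinv₁'
  have h₂ := stmt8_aux ρ L₂ hρ hL₂ ξ₂ ξ₂' hlip₂ hderiv₂ hlow₂ s₂ hinv₂ hinv₂'
  filter_upwards [h₁, h₂] with y ⟨hd₁, hl₁⟩ ⟨hd₂, hl₂⟩
  set a := ξ₁' (s₁ y)
  set b := ξ₂' (s₂ y)
  refine ⟨(1 + a)⁻¹, (1 + b)⁻¹, hd₁, hd₂, ?_⟩
  have ha : (0:ℝ) < 1 + a := lt_of_lt_of_le hρ hl₁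
  have hb : (0:ℝ) < 1 + b := lt_of_lt_of_le hρ hl₂
  rw [inv_sub_inv ha.ne' hb.ne', abs_div, abs_of_pos (mul_pos ha hb)]
  have h1 : |1 + b - (1 + a)| = |a - b| := by
    rw [show (1 + b - (1 + a)) = -(a - b) by ring, abs_neg]
  rw [h1]
  have hden : ρ ^ 2 ≤ (1 + a) * (1 + b) := by nlinarith
  have h2 : |a - b| / ((1 + a) * (1 + b)) ≤ |a - b| / ρ ^ 2 :=
    div_le_div_of_nonneg_left (abs_nonneg _) (by positivity) hden
  calc |a - b| / ((1 + a) * (1 + b)) ≤ |a - b| / ρ ^ 2 := h2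
  _ = ρ⁻¹ ^ 2 * |a - b| := by rw [div_eq_mul_inv, mul_comm, inv_pow]
end

section
/- Let G(y) = (1/2)·exp(−|y|). Let ρ > 0 and, for j = 1, 2, let ξⱼ : ℝ → ℝ be Lipschitz such that ρ ≤ 1 + ξⱼ′(σ) for almost every σ ∈ ℝ; set xⱼ(s) = s + ξⱼ(s). Then for all s, σ ∈ ℝ: |G(x₁(s) − x₁(σ)) − G(x₂(s) − x₂(σ))| ≤ G(ρ·(s − σ))·(|ξ₁(s) − ξ₂(s)| + |ξ₁(σ) − ξ₂(σ)|), and for s ≠ σ also |G′(x₁(s) − x₁(σ)) − G′(x₂(s) − x₂(σ))| ≤ G(ρ·(s − σ))·(|ξ₁(s) − ξ₂(s)| + |ξ₁(σ) − ξ₂(σ)|), where G′(y) = −(1/2)·sgn(y)·exp(−|y|). -/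
open MeasureTheory Set Filter Topology

lemma aux_mono (h : ℝ → ℝ) (M : ℝ) (hM : 0 ≤ M)
    (hlip : ∀ p q : ℝ, |h p - h q| ≤ M * |p - q|)
    (hd : ∀ᵐ x ∂(volume : Measure ℝ), ∃ d, HasDerivAt h d x ∧ 0 ≤ d)
    {a b : ℝ} (hab : a ≤ b) : h a ≤ h b := by
  have hcont : Continuous h := by
    have : LipschitzWith ⟨M, hM⟩ h :=
      LipschitzWith.of_dist_le_mul fun p q => by
        rw [Real.dist_eq, Real.dist_eq]; exact hlip p q
    exact this.continuous
  refine le_of_forall_pos_le_add fun δ hδ => ?_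
  set ε : ℝ := δ / ((b - a) + M + 2) with hεdef
  have hden : 0 < (b - a) + M + 2 := by linarith [sub_nonneg.2 hab]
  have hε : 0 < ε := div_pos hδ hden
  -- the good set
  set A : Set ℝ := {x | ∃ d, HasDerivAt h d x ∧ 0 ≤ d} with hA
  have hN : volume Aᶜ = 0 := by
    rw [hA, Set.compl_setOf]
    exact ae_iff.1 hd
  obtain ⟨U, hUA, hUopen, hUlt⟩ :=
    Set.exists_isOpen_lt_of_lt (μ := volume) Aᶜ (ENNReal.ofReal ε)
      (by simp [hN, ENNReal.ofReal_pos.2 hε])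
  have hUfin : volume U ≠ ⊤ := (hUlt.trans_le le_top).ne
  set m : ℝ → ℝ := fun x => (volume (U ∩ Ioc a x)).toReal with hm
  have hfin : ∀ x : ℝ, volume (U ∩ Ioc a x) ≠ ⊤ :=
    fun x => ((measure_mono (inter_subset_left)).trans_lt (lt_top_iff_ne_top.2 hUfin)).ne
  have hmono : ∀ p q : ℝ, p ≤ q → m p ≤ m q := fun p q hpq =>
    ENNReal.toReal_mono (hfin q) (measure_mono (inter_subset_inter_right _ (Ioc_subset_Ioc_right hpq)))
  have hup : ∀ p q : ℝ, p ≤ q → m q ≤ m p + (q - p) := by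
    intro p q hpq
    have hsub : U ∩ Ioc a q ⊆ (U ∩ Ioc a p) ∪ Ioc p q := by
      intro t ⟨htU, ht⟩
      rcases le_or_gt t p with h' | h'
      · exact Or.inl ⟨htU, ht.1, h'⟩
      · exact Or.inr ⟨h', ht.2⟩
    have := (measure_mono hsub).trans (measure_union_le (μ := volume) _ _)
    have h2 : volume (Ioc p q) = ENNReal.ofReal (q - p) := by
      simp [Real.volume_Ioc]
    calc m q ≤ ((volume (U ∩ Ioc a p)) + ENNReal.ofReal (q - p)).toReal := by
          apply ENNReal.toReal_mono _ (by rw [← h2]; exact this)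
          exact ENNReal.add_ne_top.2 ⟨hfin p, ENNReal.ofReal_ne_top⟩
      _ = m p + (q - p) := by
          rw [ENNReal.toReal_add (hfin p) ENNReal.ofReal_ne_top,
            ENNReal.toReal_ofReal (sub_nonneg.2 hpq)]
  have hdown : ∀ p q : ℝ, a ≤ p → p ≤ q → Ioc p q ⊆ U → m p + (q - p) ≤ m q := by
    intro p q hap hpq hIU
    have hsub : (U ∩ Ioc a p) ∪ Ioc p q ⊆ U ∩ Ioc a q := by
      intro t ht
      rcases ht with ⟨htU, ht⟩ | ht
      · exact ⟨htU, ht.1, ht.2.trans hpq⟩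
      · exact ⟨hIU ht, lt_of_le_of_lt hap ht.1, ht.2⟩
    have hdisj : Disjoint (U ∩ Ioc a p) (Ioc p q) := by
      apply Set.disjoint_left.2
      rintro t ⟨_, _, htp⟩ ⟨htp', _⟩
      exact absurd htp (not_le.2 htp')
    have := measure_union (μ := volume) hdisj measurableSet_Ioc
    have hle : volume (U ∩ Ioc a p) + ENNReal.ofReal (q - p) ≤ volume (U ∩ Ioc a q) := by
      rw [← Real.volume_Ioc, ← this]
      exact measure_mono hsub
    calc m p + (q - p)
        = ((volume (U ∩ Ioc a p)) + ENNReal.ofReal (q - p)).toReal := by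
          rw [ENNReal.toReal_add (hfin p) ENNReal.ofReal_ne_top,
            ENNReal.toReal_ofReal (sub_nonneg.2 hpq)]
      _ ≤ m q := ENNReal.toReal_mono (hfin q) hle
  have hmcont : Continuous m := by
    have : LipschitzWith 1 m := by
      apply LipschitzWith.of_dist_le_mul
      intro p q
      rw [Real.dist_eq, Real.dist_eq, NNReal.coe_one, one_mul]
      rcases le_total p q with hpq | hpq
      · rw [abs_sub_comm, abs_of_nonneg (sub_nonneg.2 (hmono _ _ hpq)),
          abs_of_nonpos (sub_nonpos.2 hpq)]
        linarith [hup p q hpq]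
      · rw [abs_of_nonneg (sub_nonneg.2 (hmono _ _ hpq)),
          abs_of_nonneg (sub_nonneg.2 hpq)]
        linarith [hup q p hpq]
    exact this.continuous
  set S : Set ℝ := {x ∈ Icc a b | h a - h x ≤ ε * (x - a) + (M + 1) * m x} with hS
  have hSclosed : IsClosed S := by
    apply IsClosed.inter isClosed_Icc
    exact isClosed_le (continuous_const.sub hcont)
      ((continuous_const.mul (continuous_id.sub continuous_const)).add
        (continuous_const.mul hmcont))
  have hma : m a = 0 := by simp [hm]
  have haS : a ∈ S := by
    refine ⟨⟨le_refl a, hab⟩, ?_⟩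
    simp [hma]
  have hSbdd : BddAbove S := ⟨b, fun x hx => hx.1.2⟩
  set c : ℝ := sSup S with hc
  have hcS : c ∈ S := hSclosed.csSup_mem ⟨a, haS⟩ hSbdd
  have hcb : c ≤ b := hcS.1.2
  have hac : a ≤ c := hcS.1.1
  have hcbeq : c = b := by
    by_contra hne
    have hclt : c < b := lt_of_le_of_ne hcb hne
    -- find x ∈ S with c < x, contradiction
    have : ∃ x, x ∈ S ∧ c < x := by
      by_cases hcU : c ∈ U
      · obtain ⟨δ', hδ', hball⟩ := Metric.isOpen_iff.1 hUopen c hcU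
        set x : ℝ := min b (c + δ' / 2) with hx
        have hcx : c < x := lt_min hclt (by linarith)
        have hxb : x ≤ b := min_le_left _ _
        have hIU : Ioc c x ⊆ U := by
          intro t ht
          apply hball
          rw [Metric.mem_ball, Real.dist_eq, abs_of_pos (sub_pos.2 ht.1)]
          have : t ≤ c + δ' / 2 := ht.2.trans (min_le_right _ _)
          linarith
        refine ⟨x, ⟨⟨hac.trans hcx.le, hxb⟩, ?_⟩, hcx⟩
        have h1 : h a - h c ≤ ε * (c - a) + (M + 1) * m c := hcS.2
        have h2 : h c - h x ≤ M * (x - c) := by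
          have hl := hlip c x
          have habs : |c - x| = x - c := by
            rw [abs_sub_comm]; exact abs_of_nonneg (sub_nonneg.2 hcx.le)
          rw [habs] at hl
          linarith [le_abs_self (h c - h x)]
        have h3 : m c + (x - c) ≤ m x := hdown c x hac hcx.le hIU
        nlinarith [hε]
      · have hcA : c ∈ A := by
          by_contra hcA
          exact hcU (hUA hcA)
        obtain ⟨d, hdc, hd0⟩ := hcA
        have hslope : Tendsto (slope h c) (𝓝[≠] c) (𝓝 d) :=
          hasDerivAt_iff_tendsto_slope.1 hdc
        have hev1 : ∀ᶠ x in 𝓝[>] c, -ε < slope h c x := by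
          have : ∀ᶠ x in 𝓝[≠] c, -ε < slope h c x :=
            hslope (Ioi_mem_nhds (by linarith))
          exact nhdsWithin_mono c (fun t (ht : c < t) => ne_of_gt ht) this
        have hev2 : ∀ᶠ x in 𝓝[>] c, x < b :=
          eventually_nhdsWithin_of_eventually_nhds (eventually_lt_nhds hclt)
        have hev3 : ∀ᶠ x in 𝓝[>] c, x ∈ Ioi c := eventually_mem_nhdsWithin
        obtain ⟨x, ⟨hsl, hxb⟩, hcx⟩ := ((hev1.and hev2).and hev3).exists
        have hcx : c < x := hcx
        have hxc : 0 < x - c := sub_pos.2 hcx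
        rw [slope_def_field] at hsl
        have h2 : -ε * (x - c) ≤ h x - h c := by
          have := (lt_div_iff₀ hxc).1 hsl
          linarith
        refine ⟨x, ⟨⟨hac.trans hcx.le, hxb.le⟩, ?_⟩, hcx⟩
        have h1 := hcS.2
        have h3 : m c ≤ m x := hmono c x hcx.le
        nlinarith
    obtain ⟨x, hxS, hcx⟩ := this
    exact absurd (le_csSup hSbdd hxS) (not_le.2 hcx)
  -- conclude
  have hbS : b ∈ S := hcbeq ▸ hcS
  have hmb : m b ≤ ε := by
    have : volume (U ∩ Ioc a b) ≤ ENNReal.ofReal ε :=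
      (measure_mono inter_subset_left).trans hUlt.le
    calc m b ≤ (ENNReal.ofReal ε).toReal := ENNReal.toReal_mono ENNReal.ofReal_ne_top this
      _ = ε := ENNReal.toReal_ofReal hε.le
  have := hbS.2
  have hfinal : h a - h b ≤ ε * ((b - a) + M + 1) := by nlinarith
  have : ε * ((b - a) + M + 1) ≤ δ := by
    rw [hεdef]
    rw [div_mul_eq_mul_div, div_le_iff₀ hden]
    nlinarith
  linarith

lemma aux_exp {r x y : ℝ} (hx : r ≤ |x|) (hy : r ≤ |y|) :
    |Real.exp (-|x|) - Real.exp (-|y|)| ≤ Real.exp (-r) * |x - y| := by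
  have habs : |(|x| - |y|)| ≤ |x - y| := abs_abs_sub_abs_le_abs_sub x y
  have key : ∀ u v : ℝ, r ≤ u → u ≤ v →
      Real.exp (-v) ≤ Real.exp (-u) ∧
      Real.exp (-u) - Real.exp (-v) ≤ Real.exp (-r) * (v - u) := by
    intro u v hru huv
    refine ⟨Real.exp_le_exp.2 (by linarith), ?_⟩
    have h1 : Real.exp (-v) = Real.exp (-u) * Real.exp (-(v - u)) := by
      rw [← Real.exp_add]; ring_nf
    have h2 : 1 - (v - u) ≤ Real.exp (-(v - u)) := by
      have := Real.add_one_le_exp (-(v - u)); linarith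
    have h3 : Real.exp (-u) ≤ Real.exp (-r) := Real.exp_le_exp.2 (by linarith)
    have h4 : 0 < Real.exp (-u) := Real.exp_pos _
    calc Real.exp (-u) - Real.exp (-v)
        = Real.exp (-u) * (1 - Real.exp (-(v - u))) := by rw [h1]; ring
      _ ≤ Real.exp (-u) * (v - u) := by nlinarith
      _ ≤ Real.exp (-r) * (v - u) := by nlinarith
  have hexp : 0 ≤ Real.exp (-r) := (Real.exp_pos _).le
  rcases le_total |x| |y| with hh | hh
  · obtain ⟨hmono2, hbd⟩ := key |x| |y| hx hh
    rw [abs_of_nonneg (by linarith)]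
    have : |y| - |x| ≤ |x - y| := by
      rw [abs_le] at habs; linarith [habs.1]
    nlinarith
  · obtain ⟨hmono2, hbd⟩ := key |y| |x| hy hh
    rw [abs_sub_comm, abs_of_nonneg (by linarith)]
    have : |x| - |y| ≤ |x - y| := (le_abs_self _).trans habs
    nlinarith

lemma aux_key (ρ : ℝ) (ξ ξ' : ℝ → ℝ) (L : ℝ) (hL : 0 ≤ L)
    (hlip : ∀ a b : ℝ, |ξ a - ξ b| ≤ L * |a - b|)
    (hderiv : ∀ᵐ σ ∂(volume : Measure ℝ), HasDerivAt ξ (ξ' σ) σ)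
    (hlow : ∀ᵐ σ ∂(volume : Measure ℝ), ρ ≤ 1 + ξ' σ) :
    ∀ s σ : ℝ, σ ≤ s → ρ * (s - σ) ≤ (s + ξ s) - (σ + ξ σ) := by
  intro s σ hσs
  have hM : 0 ≤ L + |1 - ρ| := add_nonneg hL (abs_nonneg _)
  have hm := aux_mono (fun t => t + ξ t - ρ * t) (L + |1 - ρ|) hM ?_ ?_ hσs
  · have hm' : σ + ξ σ - ρ * σ ≤ s + ξ s - ρ * s := hm
    linarith
  · intro p q
    have heq : (p + ξ p - ρ * p) - (q + ξ q - ρ * q)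
        = (ξ p - ξ q) + (1 - ρ) * (p - q) := by ring
    simp only [heq]
    refine (abs_add_le _ _).trans ?_
    rw [abs_mul]
    have := hlip p q
    nlinarith [abs_nonneg (p - q)]
  · filter_upwards [hderiv, hlow] with t h1 h2
    refine ⟨1 + ξ' t - ρ, ?_, by linarith⟩
    have h3 := ((hasDerivAt_id t).add h1).sub ((hasDerivAt_id t).const_mul ρ)
    simp only [id] at h3
    rw [mul_one] at h3
    exact h3

/-- Lipschitz-type estimates for the kernel `G(y) = (1/2)·exp(−|y|)`
and its derivative `G'(y) = −(1/2)·sgn(y)·exp(−|y|)` along two deformations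
`xⱼ(s) = s + ξⱼ(s)`. -/
theorem stmt_11 (ρ : ℝ) (hρ : 0 < ρ) (ξ₁ ξ₂ ξ₁' ξ₂' : ℝ → ℝ) (L₁ L₂ : ℝ)
    (hL₁ : 0 ≤ L₁) (hL₂ : 0 ≤ L₂)
    (hlip₁ : ∀ a b : ℝ, |ξ₁ a - ξ₁ b| ≤ L₁ * |a - b|)
    (hlip₂ : ∀ a b : ℝ, |ξ₂ a - ξ₂ b| ≤ L₂ * |a - b|)
    (hderiv₁ : ∀ᵐ σ ∂volume, HasDerivAt ξ₁ (ξ₁' σ) σ)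
    (hderiv₂ : ∀ᵐ σ ∂volume, HasDerivAt ξ₂ (ξ₂' σ) σ)
    (hlow₁ : ∀ᵐ σ ∂volume, ρ ≤ 1 + ξ₁' σ)
    (hlow₂ : ∀ᵐ σ ∂volume, ρ ≤ 1 + ξ₂' σ)
    (x₁ x₂ : ℝ → ℝ) (hx₁ : ∀ s, x₁ s = s + ξ₁ s) (hx₂ : ∀ s, x₂ s = s + ξ₂ s)
    (G G' : ℝ → ℝ) (hG : ∀ y, G y = (1 / 2) * Real.exp (-|y|))
    (hG' : ∀ y, G' y = -(1 / 2) * Real.sign y * Real.exp (-|y|)) :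
    (∀ s σ : ℝ,
      |G (x₁ s - x₁ σ) - G (x₂ s - x₂ σ)| ≤
        G (ρ * (s - σ)) * (|ξ₁ s - ξ₂ s| + |ξ₁ σ - ξ₂ σ|)) ∧
    (∀ s σ : ℝ, s ≠ σ →
      |G' (x₁ s - x₁ σ) - G' (x₂ s - x₂ σ)| ≤
        G (ρ * (s - σ)) * (|ξ₁ s - ξ₂ s| + |ξ₁ σ - ξ₂ σ|)) := by
  have k₁ : ∀ s σ : ℝ, σ ≤ s → ρ * (s - σ) ≤ x₁ s - x₁ σ := by
    intro s σ hσs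
    rw [hx₁, hx₁]
    exact aux_key ρ ξ₁ ξ₁' L₁ hL₁ hlip₁ hderiv₁ hlow₁ s σ hσs
  have k₂ : ∀ s σ : ℝ, σ ≤ s → ρ * (s - σ) ≤ x₂ s - x₂ σ := by
    intro s σ hσs
    rw [hx₂, hx₂]
    exact aux_key ρ ξ₂ ξ₂' L₂ hL₂ hlip₂ hderiv₂ hlow₂ s σ hσs
  have habs : ∀ (x : ℝ → ℝ), (∀ s σ : ℝ, σ ≤ s → ρ * (s - σ) ≤ x s - x σ) →
      ∀ s σ : ℝ, ρ * |s - σ| ≤ |x s - x σ| := by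
    intro x k s σ
    rcases le_total σ s with hh | hh
    · rw [abs_of_nonneg (sub_nonneg.2 hh)]
      exact (k s σ hh).trans (le_abs_self _)
    · rw [abs_sub_comm, abs_of_nonneg (sub_nonneg.2 hh), abs_sub_comm]
      exact (k σ s hh).trans (le_abs_self _)
  have habs₁ := habs x₁ k₁
  have habs₂ := habs x₂ k₂
  have hdiff : ∀ s σ : ℝ,
      |(x₁ s - x₁ σ) - (x₂ s - x₂ σ)| ≤ |ξ₁ s - ξ₂ s| + |ξ₁ σ - ξ₂ σ| := by
    intro s σ
    have heq : (x₁ s - x₁ σ) - (x₂ s - x₂ σ) = (ξ₁ s - ξ₂ s) - (ξ₁ σ - ξ₂ σ) := by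
      rw [hx₁, hx₁, hx₂, hx₂]; ring
    rw [heq]
    exact abs_sub _ _
  have hGr : ∀ s σ : ℝ, G (ρ * (s - σ)) = (1 / 2) * Real.exp (-(ρ * |s - σ|)) := by
    intro s σ
    rw [hG, abs_mul, abs_of_pos hρ]
  have core : ∀ s σ : ℝ,
      (1 / 2) * |Real.exp (-|x₁ s - x₁ σ|) - Real.exp (-|x₂ s - x₂ σ|)| ≤
        G (ρ * (s - σ)) * (|ξ₁ s - ξ₂ s| + |ξ₁ σ - ξ₂ σ|) := by
    intro s σ
    rw [hGr]
    have h1 := aux_exp (habs₁ s σ) (habs₂ s σ)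
    have h2 := hdiff s σ
    have h3 : (0:ℝ) < Real.exp (-(ρ * |s - σ|)) := Real.exp_pos _
    nlinarith [abs_nonneg ((x₁ s - x₁ σ) - (x₂ s - x₂ σ))]
  constructor
  · intro s σ
    rw [hG, hG]
    have heq : (1 / 2 : ℝ) * Real.exp (-|x₁ s - x₁ σ|) - 1 / 2 * Real.exp (-|x₂ s - x₂ σ|)
        = (1 / 2) * (Real.exp (-|x₁ s - x₁ σ|) - Real.exp (-|x₂ s - x₂ σ|)) := by ring
    rw [heq, abs_mul, abs_of_pos (by norm_num : (0:ℝ) < 1/2)]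
    exact core s σ
  · intro s σ hne
    rw [hG', hG']
    have hsgn : Real.sign (x₁ s - x₁ σ) = Real.sign (x₂ s - x₂ σ) ∧
        |Real.sign (x₁ s - x₁ σ)| = 1 := by
      rcases lt_or_gt_of_ne hne with hlt | hgt
      · have h1 : x₁ s - x₁ σ < 0 := by
          have := k₁ σ s hlt.le
          have hpos : 0 < ρ * (σ - s) := mul_pos hρ (sub_pos.2 hlt)
          linarith
        have h2 : x₂ s - x₂ σ < 0 := by
          have := k₂ σ s hlt.le
          have hpos : 0 < ρ * (σ - s) := mul_pos hρ (sub_pos.2 hlt)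
          linarith
        rw [Real.sign_of_neg h1, Real.sign_of_neg h2]
        norm_num
      · have h1 : 0 < x₁ s - x₁ σ := lt_of_lt_of_le (mul_pos hρ (sub_pos.2 hgt)) (k₁ s σ hgt.le)
        have h2 : 0 < x₂ s - x₂ σ := lt_of_lt_of_le (mul_pos hρ (sub_pos.2 hgt)) (k₂ s σ hgt.le)
        rw [Real.sign_of_pos h1, Real.sign_of_pos h2]
        norm_num
    obtain ⟨hs1, hs2⟩ := hsgn
    rw [← hs1]
    have heq : -(1 / 2 : ℝ) * Real.sign (x₁ s - x₁ σ) * Real.exp (-|x₁ s - x₁ σ|)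
          - -(1 / 2) * Real.sign (x₁ s - x₁ σ) * Real.exp (-|x₂ s - x₂ σ|)
        = -Real.sign (x₁ s - x₁ σ) *
            ((1 / 2) * (Real.exp (-|x₁ s - x₁ σ|) - Real.exp (-|x₂ s - x₂ σ|))) := by ring
    rw [heq, abs_mul, abs_neg, hs2, one_mul, abs_mul,
      abs_of_pos (by norm_num : (0:ℝ) < 1/2)]
    exact core s σ
end

section
/- Let ρ > 0, L ≥ 0, and let ξ : ℝ → ℝ be Lipschitz with constant L such that ρ ≤ 1 + ξ′(σ) for almost every σ ∈ ℝ; set x(s) = s + ξ(s). Let M : ℝ → ℝ be measurable, bounded, and square-integrable, and define F₁(s) = −∫ G′(x(s) − x(σ))·M(σ)·(1 + ξ′(σ)) dσ, where G′(y) = −(1/2)·sgn(y)·exp(−|y|). Then: (i) |F₁(s)| ≤ (1 + L)·∫ (1/2)·exp(−ρ|s − σ|)·|M(σ)| dσ for every s; (ii) sup_s |F₁(s)| ≤ ρ⁻¹·(1 + L)·sup_σ |M(σ)|; and (iii) (∫ F₁(s)² ds)^{1/2} ≤ ρ⁻¹·(1 + L)·(∫ M(σ)² dσ)^{1/2}.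 -/
open MeasureTheory Set Filter Topology

/-- `|Real.sign z| ≤ 1`. -/
lemma stmt12_abs_sign_le_one (z : ℝ) : |Real.sign z| ≤ 1 := by
  rcases lt_trichotomy z 0 with h | h | h
  · rw [Real.sign_of_neg h]; norm_num
  · rw [h, Real.sign_zero]; norm_num
  · rw [Real.sign_of_pos h]; norm_num

/-- the derivative of an `L`-Lipschitz function is bounded by `L` in absolute value. -/
lemma stmt12_deriv_abs_le {L : ℝ} {ξ : ℝ → ℝ} {t d : ℝ}
    (hlip : ∀ a b : ℝ, |ξ a - ξ b| ≤ L * |a - b|) (h : HasDerivAt ξ d t) : |d| ≤ L := by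
  have hs := hasDerivAt_iff_tendsto_slope.1 h
  refine le_of_tendsto hs.abs ?_
  filter_upwards [self_mem_nhdsWithin] with z hz
  have hz' : z - t ≠ 0 := sub_ne_zero.2 hz
  have hz'' : 0 < |z - t| := abs_pos.2 hz'
  rw [slope_def_field, abs_div, div_le_iff₀ hz'']
  calc |ξ z - ξ t| ≤ L * |z - t| := hlip z t
    _ = L * |z - t| := by ring

/-- Key monotonicity: Lipschitz + a.e. derivative ≥ ρ gives `ρ (b - a) ≤ x b - x a`. -/
lemma stmt12_mono_of_ae_deriv {ρ K : ℝ} {x d : ℝ → ℝ} (hρ : 0 ≤ ρ) (hK : 0 ≤ K)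
    (hlip : ∀ a b : ℝ, |x a - x b| ≤ K * |a - b|)
    (hd : ∀ᵐ t : ℝ ∂volume, HasDerivAt x (d t) t ∧ ρ ≤ d t) :
    ∀ a b : ℝ, a ≤ b → ρ * (b - a) ≤ x b - x a := by
  intro a b hab
  have hxc : Continuous x := by
    have : LipschitzWith (Real.toNNReal K) x := by
      apply LipschitzWith.of_dist_le_mul
      intro p q
      rw [Real.dist_eq, Real.dist_eq, Real.coe_toNNReal K hK]
      exact hlip p q
    exact this.continuous
  refine le_of_forall_pos_le_add fun ε hε => ?_
  have hba : (0:ℝ) ≤ b - a := by linarith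
  obtain ⟨c, hc⟩ : ∃ c : ℝ, c = K + ρ + 1 := ⟨_, rfl⟩
  have hc0 : (0:ℝ) < c := by rw [hc]; linarith
  obtain ⟨ε₁, hε₁def⟩ : ∃ e : ℝ, e = ε / (2 * (b - a + 1)) := ⟨_, rfl⟩
  have hε₁ : 0 < ε₁ := by
    rw [hε₁def]; apply div_pos hε; linarith
  have hN : volume {t : ℝ | ¬ (HasDerivAt x (d t) t ∧ ρ ≤ d t)} = 0 := hd
  obtain ⟨U, hUN, hUopen, hUvol⟩ :=
    Set.exists_isOpen_lt_of_lt {t : ℝ | ¬ (HasDerivAt x (d t) t ∧ ρ ≤ d t)}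
      (ENNReal.ofReal (ε / (2 * c)))
      (by rw [hN]; exact ENNReal.ofReal_pos.2 (by positivity))
  have hUfin : volume U ≠ ⊤ := (hUvol.trans ENNReal.ofReal_lt_top).ne
  set m : ℝ → ℝ := fun t => (volume (U ∩ Ioc a t)).toReal with hm
  have hmfin : ∀ t, volume (U ∩ Ioc a t) ≠ ⊤ := fun t =>
    ne_top_of_le_ne_top hUfin (measure_mono inter_subset_left)
  have hma : m a = 0 := by simp [hm]
  have hmono : ∀ {t u : ℝ}, t ≤ u → m t ≤ m u := by
    intro t u h
    exact ENNReal.toReal_mono (hmfin u)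
      (measure_mono (inter_subset_inter_right _ (Ioc_subset_Ioc_right h)))
  have hlipm : ∀ {t u : ℝ}, t ≤ u → m u ≤ m t + (u - t) := by
    intro t u h
    have hsub : U ∩ Ioc a u ⊆ (U ∩ Ioc a t) ∪ Ioc t u := by
      intro σ hσ
      rcases le_or_gt σ t with h' | h'
      · exact Or.inl ⟨hσ.1, hσ.2.1, h'⟩
      · exact Or.inr ⟨h', hσ.2.2⟩
    have hle := (measure_mono hsub).trans (measure_union_le (μ := (volume : Measure ℝ)) (U ∩ Ioc a t) (Ioc t u))
    calc m u ≤ ((volume (U ∩ Ioc a t)) + ENNReal.ofReal (u - t)).toReal := by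
          apply ENNReal.toReal_mono
          · exact ENNReal.add_ne_top.2 ⟨hmfin t, ENNReal.ofReal_ne_top⟩
          · rw [← Real.volume_Ioc]; exact hle
      _ = m t + (u - t) := by
          rw [ENNReal.toReal_add (hmfin t) ENNReal.ofReal_ne_top,
            ENNReal.toReal_ofReal (by linarith)]
  have hmcont : Continuous m := by
    have : LipschitzWith 1 m := by
      apply LipschitzWith.of_dist_le_mul
      intro p q
      rw [Real.dist_eq, Real.dist_eq, NNReal.coe_one, one_mul]
      rcases le_total p q with h | h
      · rw [abs_of_nonpos (sub_nonpos.2 (hmono h)), abs_of_nonpos (by linarith)]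
        have := hlipm h; linarith
      · rw [abs_of_nonneg (sub_nonneg.2 (hmono h)), abs_of_nonneg (by linarith)]
        have := hlipm h; linarith
    exact this.continuous
  have hgain : ∀ {t u : ℝ}, a ≤ t → t ≤ u → Ioc t u ⊆ U → m t + (u - t) ≤ m u := by
    intro t u hat htu hsubU
    have hdisj : Disjoint (U ∩ Ioc a t) (Ioc t u) :=
      Disjoint.mono_left inter_subset_right (Set.Ioc_disjoint_Ioc_of_le le_rfl)
    have hsub2 : (U ∩ Ioc a t) ∪ Ioc t u ⊆ U ∩ Ioc a u := by
      intro σ hσ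
      rcases hσ with ⟨h1, h2⟩ | h3
      · exact ⟨h1, h2.1, h2.2.trans htu⟩
      · exact ⟨hsubU h3, lt_of_le_of_lt hat h3.1, h3.2⟩
    have hmeas := measure_union (μ := (volume : Measure ℝ)) hdisj measurableSet_Ioc
    have hle : volume (U ∩ Ioc a t) + ENNReal.ofReal (u - t) ≤ volume (U ∩ Ioc a u) := by
      rw [← Real.volume_Ioc, ← hmeas]; exact measure_mono hsub2
    have h2 := ENNReal.toReal_mono (hmfin u) hle
    rwa [ENNReal.toReal_add (hmfin t) ENNReal.ofReal_ne_top,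
      ENNReal.toReal_ofReal (by linarith)] at h2
  set S : Set ℝ := {t | ρ * (t - a) ≤ x t - x a + ε₁ * (t - a) + c * m t} with hS
  have hSclosed : IsClosed S := by
    apply isClosed_le
    · exact continuous_const.mul (continuous_id.sub continuous_const)
    · exact ((hxc.sub continuous_const).add
        (continuous_const.mul (continuous_id.sub continuous_const))).add
        (continuous_const.mul hmcont)
  have haS : a ∈ S := by
    simp only [hS, mem_setOf_eq, sub_self, mul_zero, add_zero, zero_add, hma]
    norm_num
  have key : Icc a b ⊆ S := by
    apply IsClosed.Icc_subset_of_forall_exists_gt (hSclosed.inter isClosed_Icc) haS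
    rintro t ⟨htS, hta, htb⟩ y hy
    rw [mem_Ioi] at hy
    by_cases htU : t ∈ U
    · obtain ⟨r, hr0, hball⟩ := Metric.isOpen_iff.1 hUopen t htU
      set u := min y (t + r / 2) with hu
      have htu : t < u := lt_min hy (by linarith)
      have hIocU : Ioc t u ⊆ U := by
        intro σ hσ
        apply hball
        rw [Metric.mem_ball, Real.dist_eq]
        have h1 : σ ≤ t + r / 2 := hσ.2.trans (min_le_right _ _)
        have h2 : t < σ := hσ.1
        rw [abs_of_pos (by linarith)]
        linarith
      have hmg := hgain hta htu.le hIocU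
      have hxlip : |x u - x t| ≤ K * (u - t) := by
        have := hlip u t
        rwa [abs_of_pos (sub_pos.2 htu)] at this
      have hxl := (abs_le.1 hxlip).1
      refine ⟨u, ?_, htu, min_le_left _ _⟩
      have hcm : c * (m t + (u - t)) ≤ c * m u := mul_le_mul_of_nonneg_left hmg hc0.le
      have e1 : ρ * (u - a) = ρ * (t - a) + ρ * (u - t) := by ring
      have e2 : ε₁ * (u - a) = ε₁ * (t - a) + ε₁ * (u - t) := by ring
      have e3 : c * (m t + (u - t)) = c * m t + (K * (u - t) + ρ * (u - t) + (u - t)) := by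
        rw [hc]; ring
      have e4 : 0 ≤ ε₁ * (u - t) := mul_nonneg hε₁.le (by linarith)
      show ρ * (u - a) ≤ x u - x a + ε₁ * (u - a) + c * m u
      have htS' : ρ * (t - a) ≤ x t - x a + ε₁ * (t - a) + c * m t := htS
      linarith
    · have htgood : HasDerivAt x (d t) t ∧ ρ ≤ d t := by
        by_contra hcon
        exact htU (hUN hcon)
      obtain ⟨hxd, hρd⟩ := htgood
      have hslope := hasDerivAt_iff_tendsto_slope.1 hxd
      have hev : ∀ᶠ z in 𝓝[>] t, d t - ε₁ < slope x t z := by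
        have h1 : ∀ᶠ z in 𝓝[≠] t, d t - ε₁ < slope x t z :=
          hslope.eventually (eventually_gt_nhds (by linarith))
        exact h1.filter_mono (nhdsWithin_mono t fun z hz => ne_of_gt hz)
      have hmem : Ioc t y ∈ 𝓝[>] t := Ioc_mem_nhdsGT hy
      obtain ⟨u, huslope, huIoc⟩ := (hev.and (eventually_of_mem hmem fun z hz => hz)).exists
      have htu : t < u := huIoc.1
      have h0 : 0 < u - t := sub_pos.2 htu
      have hx_u : (ρ - ε₁) * (u - t) ≤ x u - x t := by
        have h1 : ρ - ε₁ ≤ slope x t u := by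
          have := huslope
          linarith
        rw [slope_def_field] at h1
        calc (ρ - ε₁) * (u - t) ≤ (x u - x t) / (u - t) * (u - t) :=
              mul_le_mul_of_nonneg_right h1 h0.le
          _ = x u - x t := by field_simp
      refine ⟨u, ?_, huIoc⟩
      have hcm : c * m t ≤ c * m u := mul_le_mul_of_nonneg_left (hmono htu.le) hc0.le
      have e1 : ρ * (u - a) = ρ * (t - a) + ρ * (u - t) := by ring
      have e2 : ε₁ * (u - a) = ε₁ * (t - a) + ε₁ * (u - t) := by ring
      have e5 : (ρ - ε₁) * (u - t) = ρ * (u - t) - ε₁ * (u - t) := by ring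
      show ρ * (u - a) ≤ x u - x a + ε₁ * (u - a) + c * m u
      have htS' : ρ * (t - a) ≤ x t - x a + ε₁ * (t - a) + c * m t := htS
      linarith
  have hbS : ρ * (b - a) ≤ x b - x a + ε₁ * (b - a) + c * m b :=
    key ⟨hab, le_refl b⟩
  have hmb : m b ≤ ε / (2 * c) := by
    have h1 : (volume U).toReal ≤ ε / (2 * c) := by
      have h2 := (ENNReal.toReal_le_toReal hUfin ENNReal.ofReal_ne_top).2 hUvol.le
      rwa [ENNReal.toReal_ofReal (by positivity)] at h2
    exact le_trans (ENNReal.toReal_mono hUfin (measure_mono inter_subset_left)) h1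
  have hε₁b : ε₁ * (b - a) ≤ ε / 2 := by
    have h1 : b - a ≤ b - a + 1 := by linarith
    have h2 : 0 < 2 * (b - a + 1) := by linarith
    calc ε₁ * (b - a) ≤ ε₁ * (b - a + 1) := mul_le_mul_of_nonneg_left h1 hε₁.le
      _ = ε / 2 := by rw [hε₁def]; field_simp
  have hcmb : c * m b ≤ ε / 2 := by
    calc c * m b ≤ c * (ε / (2 * c)) := mul_le_mul_of_nonneg_left hmb hc0.le
      _ = ε / 2 := by field_simp
  linarith

/-- Integrability of the exponential kernel. -/
lemma stmt12_kint {ρ : ℝ} (hρ : 0 < ρ) :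
    Integrable (fun u : ℝ => Real.exp (-(ρ * |u|))) := by
  have h1 : IntegrableOn (fun u : ℝ => Real.exp (-(ρ * |u|))) (Ioi 0) := by
    apply (exp_neg_integrableOn_Ioi 0 hρ).congr_fun ?_ measurableSet_Ioi
    intro u hu
    rw [mem_Ioi] at hu
    show Real.exp (-ρ * u) = Real.exp (-(ρ * |u|))
    rw [abs_of_pos hu, neg_mul]
  have h2 : IntegrableOn (fun u : ℝ => Real.exp (-(ρ * |u|))) (Iic 0) := by
    rw [← Measure.map_neg_eq_self (volume : Measure ℝ)]
    have m : MeasurableEmbedding fun x : ℝ => -x := (Homeomorph.neg ℝ).measurableEmbedding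
    rw [m.integrableOn_map_iff]
    simp_rw [Function.comp_def, abs_neg, neg_preimage, neg_Iic, neg_zero]
    exact Iff.mpr integrableOn_Ici_iff_integrableOn_Ioi h1
  have h3 := h2.union h1
  rwa [Iic_union_Ioi, integrableOn_univ] at h3

/-- Value of the kernel integral. -/
lemma stmt12_kval {ρ : ℝ} (hρ : 0 < ρ) :
    ∫ u : ℝ, (1 / 2 : ℝ) * Real.exp (-(ρ * |u|)) = ρ⁻¹ := by
  have h0 : ∫ u : ℝ, (1 / 2 : ℝ) * Real.exp (-(ρ * |u|))
      = 2 * ∫ u in Ioi (0:ℝ), (1 / 2 : ℝ) * Real.exp (-(ρ * u)) :=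
    integral_comp_abs (f := fun t => (1 / 2 : ℝ) * Real.exp (-(ρ * t)))
  rw [h0, integral_const_mul]
  have h1 : ∫ u in Ioi (0:ℝ), Real.exp (-(ρ * u)) = ρ⁻¹ := by
    have hder : ∀ u ∈ Ioi (0:ℝ),
        HasDerivAt (fun z : ℝ => -Real.exp (-(ρ * z)) / ρ) (Real.exp (-(ρ * u))) u := by
      intro u _
      have hinner : HasDerivAt (fun z : ℝ => -(ρ * z)) (-ρ) u := by
        exact (((hasDerivAt_id' u).const_mul ρ).neg).congr_deriv (by ring)
      have h := (hinner.exp.neg).div_const ρ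
      have hρ0 := hρ.ne'
      exact h.congr_deriv (by field_simp)
    have hint : IntegrableOn (fun u : ℝ => Real.exp (-(ρ * u))) (Ioi 0) := by
      apply (exp_neg_integrableOn_Ioi 0 hρ).congr_fun ?_ measurableSet_Ioi
      intro u _
      show Real.exp (-ρ * u) = Real.exp (-(ρ * u))
      rw [neg_mul]
    have htend : Tendsto (fun z : ℝ => -Real.exp (-(ρ * z)) / ρ) atTop (𝓝 0) := by
      have h1 : Tendsto (fun z : ℝ => ρ * z) atTop atTop :=
        Tendsto.const_mul_atTop hρ tendsto_id
      have h2 : Tendsto (fun z : ℝ => -(ρ * z)) atTop atBot := tendsto_neg_atBot_iff.2 h1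
      have h3 : Tendsto (fun z : ℝ => Real.exp (-(ρ * z))) atTop (𝓝 0) :=
        Real.tendsto_exp_atBot.comp h2
      have h4 := (h3.neg).div_const ρ
      simpa using h4
    have hcont : ContinuousWithinAt (fun z : ℝ => -Real.exp (-(ρ * z)) / ρ) (Ici 0) 0 := by
      apply Continuous.continuousWithinAt
      continuity
    have := MeasureTheory.integral_Ioi_of_hasDerivAt_of_tendsto hcont hder hint htend
    rw [this, mul_zero, neg_zero, Real.exp_zero, neg_div, zero_sub, neg_neg, one_div]
  rw [h1]; ring

theorem stmt12_cs {f g : ℝ → ℝ} (hf2 : Integrable (fun t => f t ^ 2))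
    (hg2 : Integrable (fun t => g t ^ 2)) (hfg : Integrable (fun t => f t * g t)) :
    (∫ t, f t * g t) ^ 2 ≤ (∫ t, f t ^ 2) * ∫ t, g t ^ 2 := by
  have key : ∀ r : ℝ, 0 ≤ (∫ t, g t ^ 2) * (r * r) + (2 * ∫ t, f t * g t) * r
      + ∫ t, f t ^ 2 := by
    intro r
    have heq : (fun t => (f t + r * g t) ^ 2)
        = fun t => f t ^ 2 + (2 * r) * (f t * g t) + r ^ 2 * g t ^ 2 := by
      funext t; ring
    have i1 : Integrable (fun t => 2 * r * (f t * g t)) := hfg.const_mul (2 * r)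
    have i2 : Integrable (fun t => r ^ 2 * g t ^ 2) := hg2.const_mul (r ^ 2)
    have i12 : Integrable (fun t => f t ^ 2 + 2 * r * (f t * g t)) := hf2.add i1
    have h1 : Integrable (fun t => (f t + r * g t) ^ 2) := by
      rw [heq]
      exact i12.add i2
    have h2 : 0 ≤ ∫ t, (f t + r * g t) ^ 2 := integral_nonneg fun t => sq_nonneg _
    have h3 : ∫ t, (f t + r * g t) ^ 2
        = (∫ t, f t ^ 2) + (2 * r) * (∫ t, f t * g t) + r ^ 2 * ∫ t, g t ^ 2 := by
      rw [heq, integral_add i12 i2, integral_add hf2 i1, integral_const_mul,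
        integral_const_mul]
    rw [h3] at h2
    nlinarith [h2]
  have hd := discrim_le_zero key
  rw [discrim] at hd
  nlinarith [hd]

/-- Pointwise, sup-norm, and `L²` estimates for the nonlinear map
`F₁(s) = −∫ G'(x(s) − x(σ))·M(σ)·(1 + ξ'(σ)) dσ`, where
`G'(y) = −(1/2)·sgn(y)·exp(−|y|)` and `x(s) = s + ξ(s)`. -/
theorem stmt_12 (ρ L : ℝ) (hρ : 0 < ρ) (hL : 0 ≤ L) (ξ ξ' : ℝ → ℝ)
    (hlip : ∀ a b : ℝ, |ξ a - ξ b| ≤ L * |a - b|)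
    (hderiv : ∀ᵐ σ ∂volume, HasDerivAt ξ (ξ' σ) σ)
    (hlow : ∀ᵐ σ ∂volume, ρ ≤ 1 + ξ' σ)
    (x : ℝ → ℝ) (hx : ∀ s, x s = s + ξ s)
    (M : ℝ → ℝ) (hMm : Measurable M)
    (hMb : BddAbove (Set.range fun σ => |M σ|))
    (hM2 : Integrable (fun σ => (M σ) ^ 2) volume)
    (F₁ : ℝ → ℝ)
    (hF₁ : ∀ s, F₁ s =
      -∫ σ, (-(1 / 2) * Real.sign (x s - x σ) * Real.exp (-|x s - x σ|)) *
        M σ * (1 + ξ' σ)) :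
    (∀ s : ℝ, |F₁ s| ≤
      (1 + L) * ∫ σ, (1 / 2) * Real.exp (-(ρ * |s - σ|)) * |M σ|) ∧
    (∀ s : ℝ, |F₁ s| ≤ ρ⁻¹ * (1 + L) * ⨆ σ, |M σ|) ∧
    (Real.sqrt (∫ s, (F₁ s) ^ 2) ≤
      ρ⁻¹ * (1 + L) * Real.sqrt (∫ σ, (M σ) ^ 2)) := by
  have hL1 : (0:ℝ) ≤ 1 + L := by linarith
  have hxl : ∀ a b : ℝ, |x a - x b| ≤ (1 + L) * |a - b| := by
    intro a b
    rw [hx a, hx b]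
    calc |a + ξ a - (b + ξ b)| = |(a - b) + (ξ a - ξ b)| := by ring_nf
      _ ≤ |a - b| + |ξ a - ξ b| := abs_add_le _ _
      _ ≤ |a - b| + L * |a - b| := by linarith [hlip a b]
      _ = (1 + L) * |a - b| := by ring
  have hxd : ∀ᵐ t : ℝ ∂volume, HasDerivAt x (1 + ξ' t) t ∧ ρ ≤ 1 + ξ' t := by
    filter_upwards [hderiv, hlow] with t h1 h2
    refine ⟨?_, h2⟩
    have h3 : HasDerivAt (fun s => s + ξ s) (1 + ξ' t) t := (hasDerivAt_id t).add h1
    have hxe : x = fun s => s + ξ s := funext hx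
    rw [hxe]
    exact h3
  have hmono := stmt12_mono_of_ae_deriv hρ.le hL1 hxl hxd
  have hgap : ∀ s σ : ℝ, ρ * |s - σ| ≤ |x s - x σ| := by
    intro s σ
    rcases le_total σ s with h | h
    · have h1 := hmono σ s h
      rw [abs_of_nonneg (by linarith : (0:ℝ) ≤ s - σ),
        abs_of_nonneg (le_trans (mul_nonneg hρ.le (by linarith)) h1)]
      exact h1
    · have h1 := hmono s σ h
      rw [abs_of_nonpos (by linarith : s - σ ≤ 0), abs_sub_comm,
        abs_of_nonneg (le_trans (mul_nonneg hρ.le (by linarith)) h1)]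
      calc ρ * -(s - σ) = ρ * (σ - s) := by ring
        _ ≤ x σ - x s := h1
  have hξb : ∀ᵐ σ ∂(volume : Measure ℝ), |1 + ξ' σ| ≤ 1 + L := by
    filter_upwards [hderiv] with σ h
    have h1 := stmt12_deriv_abs_le hlip h
    calc |1 + ξ' σ| ≤ |(1:ℝ)| + |ξ' σ| := abs_add_le _ _
      _ ≤ 1 + L := by rw [abs_one]; linarith
  obtain ⟨C, hC⟩ := hMb
  have hCb : ∀ σ, |M σ| ≤ C := fun σ => hC ⟨σ, rfl⟩
  have hker : Integrable (fun u : ℝ => Real.exp (-(ρ * |u|))) := stmt12_kint hρ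
  have hKint : ∀ s : ℝ, Integrable (fun σ : ℝ => (1/2 : ℝ) * Real.exp (-(ρ * |s - σ|))) :=
    fun s => by exact (hker.comp_sub_left s).const_mul (1/2)
  have hKint1 : ∀ σ : ℝ, Integrable (fun s : ℝ => (1/2 : ℝ) * Real.exp (-(ρ * |s - σ|))) :=
    fun σ => by exact (hker.comp_sub_right σ).const_mul (1/2)
  have hKval : ∀ s : ℝ, (∫ σ : ℝ, (1/2 : ℝ) * Real.exp (-(ρ * |s - σ|))) = ρ⁻¹ := by
    intro s
    have h := integral_sub_left_eq_self (fun u : ℝ => (1/2 : ℝ) * Real.exp (-(ρ * |u|)))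
      (volume : Measure ℝ) s
    exact h.trans (stmt12_kval hρ)
  have hKval1 : ∀ σ : ℝ, (∫ s : ℝ, (1/2 : ℝ) * Real.exp (-(ρ * |s - σ|))) = ρ⁻¹ := by
    intro σ
    have h := integral_sub_right_eq_self (μ := (volume : Measure ℝ))
      (fun u : ℝ => (1/2 : ℝ) * Real.exp (-(ρ * |u|))) σ
    exact h.trans (stmt12_kval hρ)
  have hKM : ∀ s : ℝ, Integrable (fun σ => (1/2 : ℝ) * Real.exp (-(ρ * |s - σ|)) * |M σ|) := by
    intro s
    have h := (hKint s).bdd_mul (c := C) hMm.abs.aestronglyMeasurable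
      (Filter.Eventually.of_forall fun σ => by rw [Real.norm_eq_abs, abs_abs]; exact hCb σ)
    exact h.congr (Filter.Eventually.of_forall fun σ => by ring)
  have hKM2 : ∀ s : ℝ, Integrable (fun σ => (1/2 : ℝ) * Real.exp (-(ρ * |s - σ|)) * (M σ)^2) := by
    intro s
    have h := (hKint s).bdd_mul (c := C^2) ((hMm.pow_const 2).aestronglyMeasurable)
      (Filter.Eventually.of_forall fun σ => by
        rw [Real.norm_eq_abs, abs_of_nonneg (sq_nonneg _), ← sq_abs]
        exact pow_le_pow_left₀ (abs_nonneg _) (hCb σ) 2)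
    exact h.congr (Filter.Eventually.of_forall fun σ => by ring)
  have part1 : ∀ s : ℝ, |F₁ s| ≤
      (1 + L) * ∫ σ, (1/2 : ℝ) * Real.exp (-(ρ * |s - σ|)) * |M σ| := by
    intro s
    rw [hF₁ s, abs_neg]
    calc |∫ σ, (-(1 / 2) * Real.sign (x s - x σ) * Real.exp (-|x s - x σ|)) * M σ * (1 + ξ' σ)|
        ≤ ∫ σ, ‖(-(1 / 2) * Real.sign (x s - x σ) * Real.exp (-|x s - x σ|)) * M σ * (1 + ξ' σ)‖ :=
          by rw [← Real.norm_eq_abs]; exact norm_integral_le_integral_norm _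
      _ ≤ ∫ σ, (1 + L) * ((1/2 : ℝ) * Real.exp (-(ρ * |s - σ|)) * |M σ|) := by
          apply integral_mono_of_nonneg
          · exact Filter.Eventually.of_forall fun σ => norm_nonneg _
          · exact (hKM s).const_mul (1 + L)
          · filter_upwards [hξb] with σ hw
            have e1 : Real.exp (-|x s - x σ|) ≤ Real.exp (-(ρ * |s - σ|)) :=
              Real.exp_le_exp.2 (neg_le_neg (hgap s σ))
            have e2 : |Real.sign (x s - x σ)| ≤ 1 := stmt12_abs_sign_le_one _
            rw [Real.norm_eq_abs, abs_mul, abs_mul, abs_mul, abs_mul, abs_neg,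
              abs_of_nonneg (by norm_num : (0:ℝ) ≤ (1/2 : ℝ)), Real.abs_exp]
            have h3 : |Real.sign (x s - x σ)| * Real.exp (-|x s - x σ|)
                ≤ 1 * Real.exp (-(ρ * |s - σ|)) :=
              mul_le_mul e2 e1 (Real.exp_pos _).le one_pos.le
            have t1 : (1/2 : ℝ) * |Real.sign (x s - x σ)| * Real.exp (-|x s - x σ|)
                ≤ (1/2 : ℝ) * Real.exp (-(ρ * |s - σ|)) := by nlinarith [h3]
            calc (1/2 : ℝ) * |Real.sign (x s - x σ)| * Real.exp (-|x s - x σ|) * |M σ|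
                  * |1 + ξ' σ|
                ≤ (1/2 : ℝ) * Real.exp (-(ρ * |s - σ|)) * |M σ| * (1 + L) := by
                  apply mul_le_mul _ hw (abs_nonneg _) (by positivity)
                  exact mul_le_mul t1 le_rfl (abs_nonneg _) (by positivity)
              _ = (1 + L) * ((1/2 : ℝ) * Real.exp (-(ρ * |s - σ|)) * |M σ|) := by ring
      _ = (1 + L) * ∫ σ, (1/2 : ℝ) * Real.exp (-(ρ * |s - σ|)) * |M σ| := integral_const_mul _ _
  have hSM : ∀ σ, |M σ| ≤ ⨆ τ, |M τ| := fun σ => le_ciSup ⟨C, hC⟩ σ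
  have hSM0 : (0:ℝ) ≤ ⨆ τ, |M τ| := le_trans (abs_nonneg (M 0)) (hSM 0)
  have part2 : ∀ s : ℝ, |F₁ s| ≤ ρ⁻¹ * (1 + L) * ⨆ σ, |M σ| := by
    intro s
    have h2 : (∫ σ, (1/2 : ℝ) * Real.exp (-(ρ * |s - σ|)) * |M σ|) ≤ (⨆ τ, |M τ|) * ρ⁻¹ := by
      calc (∫ σ, (1/2 : ℝ) * Real.exp (-(ρ * |s - σ|)) * |M σ|)
          ≤ ∫ σ, (⨆ τ, |M τ|) * ((1/2 : ℝ) * Real.exp (-(ρ * |s - σ|))) := by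
            apply integral_mono_of_nonneg
            · exact Filter.Eventually.of_forall fun σ => by positivity
            · exact (hKint s).const_mul _
            · apply Filter.Eventually.of_forall fun σ => ?_
              calc (1/2 : ℝ) * Real.exp (-(ρ * |s - σ|)) * |M σ|
                  ≤ (1/2 : ℝ) * Real.exp (-(ρ * |s - σ|)) * (⨆ τ, |M τ|) :=
                    mul_le_mul_of_nonneg_left (hSM σ) (by positivity)
                _ = (⨆ τ, |M τ|) * ((1/2 : ℝ) * Real.exp (-(ρ * |s - σ|))) := by ring
        _ = (⨆ τ, |M τ|) * ρ⁻¹ := by rw [integral_const_mul, hKval s]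
    calc |F₁ s| ≤ (1 + L) * ∫ σ, (1/2 : ℝ) * Real.exp (-(ρ * |s - σ|)) * |M σ| := part1 s
      _ ≤ (1 + L) * ((⨆ τ, |M τ|) * ρ⁻¹) := mul_le_mul_of_nonneg_left h2 hL1
      _ = ρ⁻¹ * (1 + L) * ⨆ τ, |M τ| := by ring
  refine ⟨part1, part2, ?_⟩
  have hCS : ∀ s : ℝ,
      (∫ σ, (1/2 : ℝ) * Real.exp (-(ρ * |s - σ|)) * |M σ|) ^ 2
        ≤ ρ⁻¹ * ∫ σ, (1/2 : ℝ) * Real.exp (-(ρ * |s - σ|)) * (M σ)^2 := by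
    intro s
    set k : ℝ → ℝ := fun σ => (1/2 : ℝ) * Real.exp (-(ρ * |s - σ|)) with hk
    have hk0 : ∀ σ, 0 ≤ k σ := fun σ => by rw [hk]; positivity
    have e2 : ∀ σ, (Real.sqrt (k σ)) ^ 2 = k σ := fun σ => Real.sq_sqrt (hk0 σ)
    have e3 : ∀ σ, (Real.sqrt (k σ) * |M σ|) ^ 2 = k σ * (M σ)^2 := by
      intro σ; rw [mul_pow, e2, sq_abs]
    have e1 : ∀ σ, Real.sqrt (k σ) * (Real.sqrt (k σ) * |M σ|) = k σ * |M σ| := by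
      intro σ; rw [← mul_assoc, Real.mul_self_sqrt (hk0 σ)]
    have i1 : Integrable (fun σ => (Real.sqrt (k σ)) ^ 2) :=
      (hKint s).congr (Filter.Eventually.of_forall fun σ => (e2 σ).symm)
    have i2 : Integrable (fun σ => (Real.sqrt (k σ) * |M σ|) ^ 2) :=
      (hKM2 s).congr (Filter.Eventually.of_forall fun σ => (e3 σ).symm)
    have i3 : Integrable (fun σ => Real.sqrt (k σ) * (Real.sqrt (k σ) * |M σ|)) :=
      (hKM s).congr (Filter.Eventually.of_forall fun σ => (e1 σ).symm)
    have hcs := stmt12_cs i1 i2 i3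
    have r1 : (∫ t, Real.sqrt (k t) * (Real.sqrt (k t) * |M t|)) = ∫ σ, k σ * |M σ| :=
      integral_congr_ae (Filter.Eventually.of_forall fun t => e1 t)
    have r2 : (∫ t, (Real.sqrt (k t)) ^ 2) = ρ⁻¹ := by
      rw [integral_congr_ae (Filter.Eventually.of_forall fun t => e2 t)]
      exact hKval s
    have r3 : (∫ t, (Real.sqrt (k t) * |M t|) ^ 2) = ∫ σ, k σ * (M σ)^2 :=
      integral_congr_ae (Filter.Eventually.of_forall fun t => e3 t)
    rw [r1, r2, r3] at hcs
    exact hcs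
  have part1sq : ∀ s : ℝ, (F₁ s)^2 ≤
      (1 + L)^2 * (ρ⁻¹ * ∫ σ, (1/2 : ℝ) * Real.exp (-(ρ * |s - σ|)) * (M σ)^2) := by
    intro s
    calc (F₁ s)^2 = |F₁ s|^2 := (sq_abs _).symm
      _ ≤ ((1 + L) * ∫ σ, (1/2 : ℝ) * Real.exp (-(ρ * |s - σ|)) * |M σ|)^2 :=
          pow_le_pow_left₀ (abs_nonneg _) (part1 s) 2
      _ = (1 + L)^2 * (∫ σ, (1/2 : ℝ) * Real.exp (-(ρ * |s - σ|)) * |M σ|)^2 := by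
          rw [mul_pow]
      _ ≤ (1 + L)^2 * (ρ⁻¹ * ∫ σ, (1/2 : ℝ) * Real.exp (-(ρ * |s - σ|)) * (M σ)^2) :=
          mul_le_mul_of_nonneg_left (hCS s) (by positivity)
  have hPmeas : AEStronglyMeasurable
      (fun p : ℝ × ℝ => (1/2 : ℝ) * Real.exp (-(ρ * |p.1 - p.2|)) * (M p.2)^2)
      ((volume : Measure ℝ).prod volume) := by
    apply Measurable.aestronglyMeasurable
    apply Measurable.mul
    · exact (continuous_const.mul (Real.continuous_exp.comp
        (continuous_const.mul (continuous_fst.sub continuous_snd).abs).neg)).measurable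
    · exact (hMm.comp measurable_snd).pow_const 2
  have hPint : Integrable
      (fun p : ℝ × ℝ => (1/2 : ℝ) * Real.exp (-(ρ * |p.1 - p.2|)) * (M p.2)^2)
      ((volume : Measure ℝ).prod volume) := by
    rw [integrable_prod_iff' hPmeas]
    constructor
    · exact Filter.Eventually.of_forall fun σ => by exact (hKint1 σ).mul_const ((M σ)^2)
    · have heq : ∀ σ : ℝ,
          (∫ s, ‖(1/2 : ℝ) * Real.exp (-(ρ * |s - σ|)) * (M σ)^2‖) = ρ⁻¹ * (M σ)^2 := by
        intro σ
        have hnn : ∀ s : ℝ, ‖(1/2 : ℝ) * Real.exp (-(ρ * |s - σ|)) * (M σ)^2‖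
            = (1/2 : ℝ) * Real.exp (-(ρ * |s - σ|)) * (M σ)^2 := fun s =>
          Real.norm_of_nonneg (by positivity)
        rw [integral_congr_ae (Filter.Eventually.of_forall hnn), integral_mul_const,
          hKval1 σ, mul_comm]
      exact Integrable.congr (hM2.const_mul ρ⁻¹)
        (Filter.Eventually.of_forall fun σ => (heq σ).symm)
  have hQint : Integrable (fun s => ∫ σ, (1/2 : ℝ) * Real.exp (-(ρ * |s - σ|)) * (M σ)^2) := by
    have h := hPint.integral_prod_left
    exact h
  have hswap := integral_integral_swap
    (f := fun s σ : ℝ => (1/2 : ℝ) * Real.exp (-(ρ * |s - σ|)) * (M σ)^2) (by exact hPint)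
  have hQval : (∫ s, ∫ σ, (1/2 : ℝ) * Real.exp (-(ρ * |s - σ|)) * (M σ)^2)
      = ρ⁻¹ * ∫ σ, (M σ)^2 := by
    rw [hswap]
    have hin : ∀ σ : ℝ,
        (∫ s, (1/2 : ℝ) * Real.exp (-(ρ * |s - σ|)) * (M σ)^2) = ρ⁻¹ * (M σ)^2 := by
      intro σ; rw [integral_mul_const, hKval1 σ, mul_comm]
    rw [integral_congr_ae (Filter.Eventually.of_forall hin), integral_const_mul]
  have hfinal : (∫ s, (F₁ s)^2) ≤ (1 + L)^2 * (ρ⁻¹ * (ρ⁻¹ * ∫ σ, (M σ)^2)) := by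
    calc (∫ s, (F₁ s)^2)
        ≤ ∫ s, (1 + L)^2 * (ρ⁻¹ * ∫ σ, (1/2 : ℝ) * Real.exp (-(ρ * |s - σ|)) * (M σ)^2) := by
          apply integral_mono_of_nonneg (Filter.Eventually.of_forall fun s => sq_nonneg _)
          · exact (hQint.const_mul ρ⁻¹).const_mul ((1 + L)^2)
          · exact Filter.Eventually.of_forall part1sq
      _ = (1 + L)^2 * (ρ⁻¹ * ∫ s, ∫ σ, (1/2 : ℝ) * Real.exp (-(ρ * |s - σ|)) * (M σ)^2) := by
          rw [integral_const_mul, integral_const_mul]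
      _ = (1 + L)^2 * (ρ⁻¹ * (ρ⁻¹ * ∫ σ, (M σ)^2)) := by rw [hQval]
  calc Real.sqrt (∫ s, (F₁ s)^2)
      ≤ Real.sqrt ((1 + L)^2 * (ρ⁻¹ * (ρ⁻¹ * ∫ σ, (M σ)^2))) := Real.sqrt_le_sqrt hfinal
    _ = ρ⁻¹ * (1 + L) * Real.sqrt (∫ σ, (M σ)^2) := by
        rw [show (1 + L)^2 * (ρ⁻¹ * (ρ⁻¹ * ∫ σ, (M σ)^2))
            = (ρ⁻¹ * (1 + L))^2 * ∫ σ, (M σ)^2 by ring,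
          Real.sqrt_mul (by positivity), Real.sqrt_sq (by positivity)]
end

section
/- Let ρ > 0 and let ξ : ℝ → ℝ be Lipschitz such that ρ ≤ 1 + ξ′(σ) for almost every σ ∈ ℝ; set x(s) = s + ξ(s). Let M : ℝ → ℝ be measurable, bounded, and square-integrable, and define F₁(s) = −∫ G′(x(s) − x(σ))·M(σ)·(1 + ξ′(σ)) dσ with G′(y) = −(1/2)·sgn(y)·exp(−|y|) and G(y) = (1/2)·exp(−|y|). Then F₁ is Lipschitz and bounded, and for almost every s ∈ ℝ, F₁ is differentiable at s with F₁′(s) = ( M(s) − ∫ G(x(s) − x(σ))·M(σ)·(1 + ξ′(σ)) dσ )·(1 + ξ′(s)). -/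
open MeasureTheory Set Metric Filter Topology intervalIntegral

lemma aux_primitive_hasDerivAt {f : ℝ → ℝ} (hf : LocallyIntegrable f volume)
    {A : ℝ → ℝ} (hA : ∀ a b : ℝ, a ≤ b → A b - A a = ∫ σ in Set.Ioc a b, f σ) :
    ∀ᵐ s ∂volume, HasDerivAt A (f s) s := by
  filter_upwards [IsUnifLocDoublingMeasure.ae_tendsto_average_norm_sub volume hf 1] with s hs
  have hδ : Tendsto (fun t : ℝ => |t - s|) (𝓝[≠] s) (𝓝[>] (0:ℝ)) := by
    rw [tendsto_nhdsWithin_iff]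
    constructor
    · have : Tendsto (fun t : ℝ => |t - s|) (𝓝 s) (𝓝 |s - s|) :=
        (continuous_abs.comp (continuous_id.sub continuous_const)).continuousAt.tendsto
      simpa using this.mono_left nhdsWithin_le_nhds
    · filter_upwards [eventually_mem_nhdsWithin] with t ht
      simpa [sub_eq_zero] using ht
  have key : Tendsto (fun t : ℝ => ⨍ y in closedBall s |t - s|, ‖f y - f s‖) (𝓝[≠] s) (𝓝 0) :=
    hs (fun _ => s) (fun t => |t - s|) hδ (by
      filter_upwards with t
      simp [Metric.mem_closedBall, dist_self, abs_nonneg, one_mul])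
  rw [hasDerivAt_iff_tendsto_slope, tendsto_iff_dist_tendsto_zero]
  have key2 : Tendsto (fun t : ℝ => 2 * ⨍ y in closedBall s |t - s|, ‖f y - f s‖)
      (𝓝[≠] s) (𝓝 0) := by simpa using key.const_mul (2:ℝ)
  refine squeeze_zero' (by filter_upwards with t; exact dist_nonneg) ?_ key2
  filter_upwards [eventually_mem_nhdsWithin] with t ht
  have hts : t ≠ s := by simpa using ht
  have habs : (0:ℝ) < |t - s| := abs_pos.2 (sub_ne_zero.2 hts)
  have hIcb : IntegrableOn (fun y => ‖f y - f s‖) (closedBall s |t - s|) volume :=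
    ((hf.integrableOn_isCompact (isCompact_closedBall s _)).sub
      (integrableOn_const (by
        rw [Real.volume_closedBall]; exact ENNReal.ofReal_ne_top))).norm
  have hInn : (0:ℝ) ≤ ∫ y in closedBall s |t - s|, ‖f y - f s‖ :=
    setIntegral_nonneg measurableSet_closedBall (fun y _ => norm_nonneg _)
  have hsub : ∀ a b : ℝ, a ≤ b → Ioc a b ⊆ closedBall s |t - s| →
      |A b - A a - (b - a) * f s| ≤ ∫ y in closedBall s |t - s|, ‖f y - f s‖ := by
    intro a b hab hss
    have hint : IntegrableOn f (Ioc a b) volume :=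
      (hf.integrableOn_isCompact (isCompact_closedBall s |t - s|)).mono_set hss
    have h1 : A b - A a = ∫ σ in Ioc a b, f σ := hA a b hab
    have h2 : (b - a) * f s = ∫ _σ in Ioc a b, f s := by
      simp [setIntegral_const, Real.volume_Ioc, ENNReal.toReal_ofReal (sub_nonneg.2 hab),
        smul_eq_mul, mul_comm, hab]
    rw [h1, h2, ← MeasureTheory.integral_sub hint (integrableOn_const (by
        rw [Real.volume_Ioc]; exact ENNReal.ofReal_ne_top))]
    calc |∫ σ in Ioc a b, (f σ - f s)| ≤ ∫ σ in Ioc a b, ‖f σ - f s‖ := by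
          rw [← Real.norm_eq_abs]; exact norm_integral_le_integral_norm _
      _ ≤ ∫ y in closedBall s |t - s|, ‖f y - f s‖ := by
          apply setIntegral_mono_set hIcb
          · filter_upwards with y using norm_nonneg _
          · exact HasSubset.Subset.eventuallyLE hss
  have hdist : dist (slope A s t) (f s) ≤ |t - s|⁻¹ * ∫ y in closedBall s |t - s|, ‖f y - f s‖ := by
    rw [Real.dist_eq, slope_def_field]
    have hne : t - s ≠ 0 := sub_ne_zero.2 hts
    have heq : (A t - A s) / (t - s) - f s = (A t - A s - (t - s) * f s) / (t - s) := by
      field_simp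
    rw [heq, abs_div, div_eq_inv_mul]
    gcongr
    rcases le_total s t with h | h
    · exact hsub s t h (fun y hy => by
        simp only [Metric.mem_closedBall, Real.dist_eq]
        rw [abs_of_nonneg (sub_nonneg.2 hy.1.le), abs_of_nonneg (sub_nonneg.2 h)]
        linarith [hy.2])
    · have := hsub t s h (fun y hy => by
        simp only [Metric.mem_closedBall, Real.dist_eq]
        rw [abs_of_nonpos (sub_nonpos.2 hy.2), abs_of_nonpos (sub_nonpos.2 h)]
        linarith [hy.1])
      calc |A t - A s - (t - s) * f s| = |A s - A t - (s - t) * f s| := by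
            rw [← abs_neg]; ring_nf
        _ ≤ _ := this
  refine hdist.trans ?_
  have hvol : ∫ y in closedBall s |t - s|, ‖f y - f s‖
      = (2 * |t - s|) * ⨍ y in closedBall s |t - s|, ‖f y - f s‖ := by
    rw [setAverage_eq, smul_eq_mul, Real.volume_real_closedBall (by positivity)]
    field_simp
  rw [hvol]
  rw [show |t - s|⁻¹ * ((2 * |t - s|) * ⨍ y in closedBall s |t - s|, ‖f y - f s‖)
      = 2 * ((⨍ y in closedBall s |t - s|, ‖f y - f s‖) * (|t - s| * |t - s|⁻¹)) by ring,
    mul_inv_cancel₀ habs.ne', mul_one]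

lemma aux_ftc {ξ ξ' : ℝ → ℝ} {L : ℝ} (hL : 0 ≤ L)
    (hlip : ∀ a b : ℝ, |ξ a - ξ b| ≤ L * |a - b|)
    (hderiv : ∀ᵐ σ ∂(volume : Measure ℝ), HasDerivAt ξ (ξ' σ) σ)
    (hint : ∀ a b : ℝ, IntegrableOn ξ' (Set.Ioc a b) volume) :
    ∀ a b : ℝ, a ≤ b → ξ b - ξ a = ∫ σ in Set.Ioc a b, ξ' σ := by
  have hcont : Continuous ξ := by
    have hlw : LipschitzWith (Real.toNNReal L) ξ :=
      LipschitzWith.of_dist_le_mul (fun a b => by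
        simp only [Real.dist_eq, Real.coe_toNNReal L hL]; exact hlip a b)
    exact hlw.continuous
  intro a b hab
  set h : ℕ → ℝ := fun n => ((n : ℝ) + 1)⁻¹ with hh
  have hpos : ∀ n, 0 < h n := fun n => by positivity
  have htend0 : Tendsto h atTop (𝓝 0) := by
    simpa [hh, one_div] using tendsto_one_div_add_atTop_nhds_zero_nat (𝕜 := ℝ)
  set G : ℕ → ℝ → ℝ := fun n t => (ξ (t + h n) - ξ t) / h n with hG
  -- pointwise a.e. convergence
  have hptw : ∀ᵐ t ∂(volume : Measure ℝ), Tendsto (fun n => G n t) atTop (𝓝 (ξ' t)) := by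
    filter_upwards [hderiv] with t ht
    have hseq : Tendsto (fun n => t + h n) atTop (𝓝[≠] t) := by
      rw [tendsto_nhdsWithin_iff]
      constructor
      · simpa using (tendsto_const_nhds.add htend0)
      · filter_upwards with n
        simp only [mem_compl_iff, mem_singleton_iff]
        have := hpos n; intro hc; nlinarith [hc ▸ (by linarith : t < t + h n)]
    have := (hasDerivAt_iff_tendsto_slope.mp ht).comp hseq
    refine this.congr fun n => ?_
    simp only [Function.comp_apply]
    rw [slope_def_field]
    simp [hG, add_sub_cancel_left]
  -- integral convergence by dominated convergence
  have hmeasG : ∀ n, AEStronglyMeasurable (G n) (volume.restrict (Set.Ioc a b)) := fun n =>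
    ((hcont.comp (continuous_id.add continuous_const)).sub hcont).div_const _
      |>.aestronglyMeasurable
  have hbdG : ∀ n, ∀ᵐ t ∂(volume.restrict (Set.Ioc a b)), ‖G n t‖ ≤ L := by
    intro n
    filter_upwards with t
    rw [Real.norm_eq_abs, hG]
    simp only [abs_div, abs_of_pos (hpos n)]
    rw [div_le_iff₀ (hpos n)]
    calc |ξ (t + h n) - ξ t| ≤ L * |t + h n - t| := hlip _ _
      _ = L * h n := by rw [show t + h n - t = h n by ring, abs_of_pos (hpos n)]
  have hIconv : Tendsto (fun n => ∫ t in Set.Ioc a b, G n t) atTop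
      (𝓝 (∫ t in Set.Ioc a b, ξ' t)) := by
    refine tendsto_integral_of_dominated_convergence (fun _ => L) hmeasG ?_ hbdG
      (ae_restrict_of_ae hptw)
    exact integrableOn_const (by rw [Real.volume_Ioc]; exact ENNReal.ofReal_ne_top)
  -- compute the integrals of G n
  have hintξ : ∀ c d : ℝ, IntervalIntegrable ξ volume c d := fun c d =>
    hcont.intervalIntegrable c d
  have hcompute : ∀ n, ∫ t in Set.Ioc a b, G n t
      = ((∫ t in b..(b + h n), ξ t) - ∫ t in a..(a + h n), ξ t) / h n := by
    intro n
    have h1 : ∫ t in Set.Ioc a b, G n t = ∫ t in a..b, G n t := (integral_of_le hab).symm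
    rw [h1, hG]
    simp only
    rw [intervalIntegral.integral_div]
    congr 1
    have hc2 : Continuous fun t : ℝ => ξ (t + h n) := by
      exact hcont.comp (continuous_id.add continuous_const)
    rw [intervalIntegral.integral_sub (hc2.intervalIntegrable a b) (hintξ a b)]
    have h2 : (∫ t in a..b, ξ (t + h n)) = ∫ t in (a + h n)..(b + h n), ξ t :=
      intervalIntegral.integral_comp_add_right (a := a) (b := b) ξ (h n)
    rw [h2]
    have c1 : (∫ t in a..(a + h n), ξ t) + (∫ t in (a + h n)..(b + h n), ξ t)
        = ∫ t in a..(b + h n), ξ t :=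
      intervalIntegral.integral_add_adjacent_intervals (hintξ _ _) (hintξ _ _)
    have c2 : (∫ t in a..b, ξ t) + (∫ t in b..(b + h n), ξ t)
        = ∫ t in a..(b + h n), ξ t :=
      intervalIntegral.integral_add_adjacent_intervals (hintξ _ _) (hintξ _ _)
    linarith [c1, c2]
  -- each endpoint slope tends to the value
  have hslope : ∀ c : ℝ, Tendsto (fun n => (∫ t in c..(c + h n), ξ t) / h n) atTop (𝓝 (ξ c)) := by
    intro c
    have hΦ : HasDerivAt (fun u => ∫ t in c..u, ξ t) (ξ c) c :=
      intervalIntegral.integral_hasDerivAt_right (hintξ c c)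
        (hcont.stronglyMeasurable.stronglyMeasurableAtFilter) hcont.continuousAt
    have hseq : Tendsto (fun n => c + h n) atTop (𝓝[≠] c) := by
      rw [tendsto_nhdsWithin_iff]
      constructor
      · simpa using (tendsto_const_nhds.add htend0)
      · filter_upwards with n
        simp only [mem_compl_iff, mem_singleton_iff]
        have := hpos n; intro hc; nlinarith [hc ▸ (by linarith : c < c + h n)]
    have := (hasDerivAt_iff_tendsto_slope.mp hΦ).comp hseq
    refine this.congr fun n => ?_
    simp only [Function.comp_apply]
    rw [slope_def_field]
    simp [intervalIntegral.integral_same, add_sub_cancel_left]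
  have hlim2 : Tendsto (fun n => ∫ t in Set.Ioc a b, G n t) atTop (𝓝 (ξ b - ξ a)) := by
    have := (hslope b).sub (hslope a)
    refine this.congr fun n => ?_
    rw [hcompute n, sub_div]
  exact (tendsto_nhds_unique hlim2 hIconv)

section AuxExp

lemma aux_exp_Ioi {ρ : ℝ} (hρ : 0 < ρ) (s : ℝ) :
    IntegrableOn (fun σ => Real.exp (ρ * (s - σ))) (Set.Ioi s) volume := by
  have h1 : IntegrableOn (fun σ : ℝ => Real.exp (-ρ * σ)) (Set.Ioi s) volume :=
    exp_neg_integrableOn_Ioi s hρ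
  refine (h1.const_mul (Real.exp (ρ * s))).congr ?_
  filter_upwards with σ
  rw [← Real.exp_add]
  ring_nf

lemma aux_exp_int_Ioi {ρ : ℝ} (hρ : 0 < ρ) (s : ℝ) :
    ∫ σ in Set.Ioi s, Real.exp (ρ * (s - σ)) = ρ⁻¹ := by
  have h2 : ∫ σ in Set.Ioi s, Real.exp (-(σ * ρ)) = ρ⁻¹ * Real.exp (-(s * ρ)) := by
    have := integral_comp_mul_right_Ioi (fun u => Real.exp (-u)) s hρ
    rw [integral_exp_neg_Ioi] at this
    simpa [smul_eq_mul] using this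
  have h3 : ∀ σ : ℝ, Real.exp (ρ * (s - σ)) = Real.exp (ρ * s) * Real.exp (-(σ * ρ)) := by
    intro σ; rw [← Real.exp_add]; ring_nf
  calc ∫ σ in Set.Ioi s, Real.exp (ρ * (s - σ))
      = ∫ σ in Set.Ioi s, Real.exp (ρ * s) * Real.exp (-(σ * ρ)) := by
        simp_rw [h3]
    _ = Real.exp (ρ * s) * ∫ σ in Set.Ioi s, Real.exp (-(σ * ρ)) := MeasureTheory.integral_const_mul _ _
    _ = ρ⁻¹ := by
        rw [h2, ← mul_assoc, mul_comm (Real.exp (ρ * s)) ρ⁻¹, mul_assoc, ← Real.exp_add]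
        rw [show ρ * s + -(s * ρ) = 0 by ring, Real.exp_zero, mul_one]

lemma aux_exp_Iic {ρ : ℝ} (hρ : 0 < ρ) (s : ℝ) :
    IntegrableOn (fun σ => Real.exp (ρ * (σ - s))) (Set.Iic s) volume := by
  have A : MeasurableEmbedding (fun x : ℝ => -x) :=
    (Homeomorph.neg ℝ).isClosedEmbedding.measurableEmbedding
  have hmap : volume.restrict (Set.Iic s)
      = (volume.restrict (Set.Ici (-s))).map (fun x : ℝ => -x) := by
    rw [← Measure.map_neg_eq_self (volume : Measure ℝ), Measure.restrict_map
      measurable_neg measurableSet_Iic]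
    congr 1
    ext y
    simp [neg_le]
  rw [IntegrableOn, hmap, A.integrable_map_iff]
  have h1 : IntegrableOn (fun σ : ℝ => Real.exp (ρ * (-σ - s))) (Set.Ici (-s)) volume := by
    rw [integrableOn_Ici_iff_integrableOn_Ioi]
    refine (aux_exp_Ioi hρ (-s)).congr ?_
    filter_upwards with σ
    ring_nf
  exact h1

lemma aux_exp_int_Iic {ρ : ℝ} (hρ : 0 < ρ) (s : ℝ) :
    ∫ σ in Set.Iic s, Real.exp (ρ * (σ - s)) = ρ⁻¹ := by
  have := integral_comp_neg_Iic s (fun u => Real.exp (ρ * (-u - s)))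
  simp only [neg_neg] at this
  rw [this]
  have h3 : ∫ x in Set.Ioi (-s), Real.exp (ρ * (-x - s))
      = ∫ x in Set.Ioi (-s), Real.exp (ρ * ((-s) - x)) := by
    congr 1; ext σ; congr 1; ring
  rw [h3, aux_exp_int_Ioi hρ]

end AuxExp

section AuxSide

variable {ρ E : ℝ} {x W : ℝ → ℝ}

lemma aux_fI (hρ : 0 < ρ) (hE : 0 ≤ E) (hxc : Continuous x)
    (hxlow : ∀ a b : ℝ, a ≤ b → ρ * (b - a) ≤ x b - x a)
    (hW : AEStronglyMeasurable W volume)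
    (hWb : ∀ᵐ σ ∂(volume : Measure ℝ), |W σ| ≤ E) (s : ℝ) :
    IntegrableOn (fun σ => Real.exp (x σ) * W σ) (Set.Iic s) volume := by
  refine Integrable.mono' ((aux_exp_Iic hρ s).const_mul (E * Real.exp (x s))) ?_ ?_
  · exact (((Real.continuous_exp.comp hxc).aestronglyMeasurable).mul hW).restrict
  · filter_upwards [ae_restrict_of_ae hWb, ae_restrict_mem measurableSet_Iic] with σ h1 h2
    rw [Real.norm_eq_abs, abs_mul, abs_of_pos (Real.exp_pos _)]
    have hxs : x σ ≤ x s + ρ * (σ - s) := by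
      have := hxlow σ s h2
      linarith
    calc Real.exp (x σ) * |W σ| ≤ (Real.exp (x s) * Real.exp (ρ * (σ - s))) * E := by
          apply mul_le_mul _ h1 (abs_nonneg _) (by positivity)
          rw [← Real.exp_add]
          exact Real.exp_le_exp.2 hxs
      _ = E * Real.exp (x s) * Real.exp (ρ * (σ - s)) := by ring

lemma aux_gI (hρ : 0 < ρ) (hE : 0 ≤ E) (hxc : Continuous x)
    (hxlow : ∀ a b : ℝ, a ≤ b → ρ * (b - a) ≤ x b - x a)
    (hW : AEStronglyMeasurable W volume)
    (hWb : ∀ᵐ σ ∂(volume : Measure ℝ), |W σ| ≤ E) (s : ℝ) :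
    IntegrableOn (fun σ => Real.exp (-x σ) * W σ) (Set.Ioi s) volume := by
  refine Integrable.mono' ((aux_exp_Ioi hρ s).const_mul (E * Real.exp (-x s))) ?_ ?_
  · exact (((Real.continuous_exp.comp hxc.neg).aestronglyMeasurable).mul hW).restrict
  · filter_upwards [ae_restrict_of_ae hWb, ae_restrict_mem measurableSet_Ioi] with σ h1 h2
    rw [Real.norm_eq_abs, abs_mul, abs_of_pos (Real.exp_pos _)]
    have hxs : -x σ ≤ -x s + ρ * (s - σ) := by
      have := hxlow s σ (le_of_lt h2)
      linarith
    calc Real.exp (-x σ) * |W σ| ≤ (Real.exp (-x s) * Real.exp (ρ * (s - σ))) * E := by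
          apply mul_le_mul _ h1 (abs_nonneg _) (by positivity)
          rw [← Real.exp_add]
          exact Real.exp_le_exp.2 hxs
      _ = E * Real.exp (-x s) * Real.exp (ρ * (s - σ)) := by ring

lemma aux_fI_bound (hρ : 0 < ρ) (hE : 0 ≤ E) (hxc : Continuous x)
    (hxlow : ∀ a b : ℝ, a ≤ b → ρ * (b - a) ≤ x b - x a)
    (hW : AEStronglyMeasurable W volume)
    (hWb : ∀ᵐ σ ∂(volume : Measure ℝ), |W σ| ≤ E) (s : ℝ) :
    |∫ σ in Set.Iic s, Real.exp (x σ) * W σ| ≤ E * Real.exp (x s) * ρ⁻¹ := by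
  have hdom : IntegrableOn (fun σ => E * Real.exp (x s) * Real.exp (ρ * (σ - s)))
      (Set.Iic s) volume := (aux_exp_Iic hρ s).const_mul _
  calc |∫ σ in Set.Iic s, Real.exp (x σ) * W σ|
      ≤ ∫ σ in Set.Iic s, ‖Real.exp (x σ) * W σ‖ := by
        rw [← Real.norm_eq_abs]; exact norm_integral_le_integral_norm _
    _ ≤ ∫ σ in Set.Iic s, E * Real.exp (x s) * Real.exp (ρ * (σ - s)) := by
        refine integral_mono_ae (aux_fI hρ hE hxc hxlow hW hWb s).norm hdom ?_
        filter_upwards [ae_restrict_of_ae hWb, ae_restrict_mem measurableSet_Iic] with σ h1 h2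
        rw [Real.norm_eq_abs, abs_mul, abs_of_pos (Real.exp_pos _)]
        have hxs : x σ ≤ x s + ρ * (σ - s) := by have := hxlow σ s h2; linarith
        calc Real.exp (x σ) * |W σ| ≤ (Real.exp (x s) * Real.exp (ρ * (σ - s))) * E := by
              apply mul_le_mul _ h1 (abs_nonneg _) (by positivity)
              rw [← Real.exp_add]; exact Real.exp_le_exp.2 hxs
          _ = E * Real.exp (x s) * Real.exp (ρ * (σ - s)) := by ring
    _ = E * Real.exp (x s) * ρ⁻¹ := by
        rw [MeasureTheory.integral_const_mul, aux_exp_int_Iic hρ]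

lemma aux_gI_bound (hρ : 0 < ρ) (hE : 0 ≤ E) (hxc : Continuous x)
    (hxlow : ∀ a b : ℝ, a ≤ b → ρ * (b - a) ≤ x b - x a)
    (hW : AEStronglyMeasurable W volume)
    (hWb : ∀ᵐ σ ∂(volume : Measure ℝ), |W σ| ≤ E) (s : ℝ) :
    |∫ σ in Set.Ioi s, Real.exp (-x σ) * W σ| ≤ E * Real.exp (-x s) * ρ⁻¹ := by
  have hdom : IntegrableOn (fun σ => E * Real.exp (-x s) * Real.exp (ρ * (s - σ)))
      (Set.Ioi s) volume := (aux_exp_Ioi hρ s).const_mul _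
  calc |∫ σ in Set.Ioi s, Real.exp (-x σ) * W σ|
      ≤ ∫ σ in Set.Ioi s, ‖Real.exp (-x σ) * W σ‖ := by
        rw [← Real.norm_eq_abs]; exact norm_integral_le_integral_norm _
    _ ≤ ∫ σ in Set.Ioi s, E * Real.exp (-x s) * Real.exp (ρ * (s - σ)) := by
        refine integral_mono_ae (aux_gI hρ hE hxc hxlow hW hWb s).norm hdom ?_
        filter_upwards [ae_restrict_of_ae hWb, ae_restrict_mem measurableSet_Ioi] with σ h1 h2
        rw [Real.norm_eq_abs, abs_mul, abs_of_pos (Real.exp_pos _)]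
        have hxs : -x σ ≤ -x s + ρ * (s - σ) := by have := hxlow s σ h2.le; linarith
        calc Real.exp (-x σ) * |W σ| ≤ (Real.exp (-x s) * Real.exp (ρ * (s - σ))) * E := by
              apply mul_le_mul _ h1 (abs_nonneg _) (by positivity)
              rw [← Real.exp_add]; exact Real.exp_le_exp.2 hxs
          _ = E * Real.exp (-x s) * Real.exp (ρ * (s - σ)) := by ring
    _ = E * Real.exp (-x s) * ρ⁻¹ := by
        rw [MeasureTheory.integral_const_mul, aux_exp_int_Ioi hρ]

lemma aux_f_diff (hρ : 0 < ρ) (hE : 0 ≤ E) (hxc : Continuous x)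
    (hxlow : ∀ a b : ℝ, a ≤ b → ρ * (b - a) ≤ x b - x a)
    (hW : AEStronglyMeasurable W volume)
    (hWb : ∀ᵐ σ ∂(volume : Measure ℝ), |W σ| ≤ E) {a b : ℝ} (hab : a ≤ b) :
    (∫ σ in Set.Iic b, Real.exp (x σ) * W σ) - (∫ σ in Set.Iic a, Real.exp (x σ) * W σ)
      = ∫ σ in Set.Ioc a b, Real.exp (x σ) * W σ := by
  have h := setIntegral_union (f := fun σ => Real.exp (x σ) * W σ) (μ := volume)
    (Set.Iic_disjoint_Ioc le_rfl) measurableSet_Ioc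
    (aux_fI hρ hE hxc hxlow hW hWb a)
    ((aux_fI hρ hE hxc hxlow hW hWb b).mono_set Set.Ioc_subset_Iic_self)
  rw [Set.Iic_union_Ioc_eq_Iic hab] at h
  linarith [h]

lemma aux_g_diff (hρ : 0 < ρ) (hE : 0 ≤ E) (hxc : Continuous x)
    (hxlow : ∀ a b : ℝ, a ≤ b → ρ * (b - a) ≤ x b - x a)
    (hW : AEStronglyMeasurable W volume)
    (hWb : ∀ᵐ σ ∂(volume : Measure ℝ), |W σ| ≤ E) {a b : ℝ} (hab : a ≤ b) :
    (∫ σ in Set.Ioi a, Real.exp (-x σ) * W σ) - (∫ σ in Set.Ioi b, Real.exp (-x σ) * W σ)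
      = ∫ σ in Set.Ioc a b, Real.exp (-x σ) * W σ := by
  have h := setIntegral_union (f := fun σ => Real.exp (-x σ) * W σ) (μ := volume)
    (Set.Ioc_disjoint_Ioi le_rfl) measurableSet_Ioi
    ((aux_gI hρ hE hxc hxlow hW hWb a).mono_set (Set.Ioc_subset_Ioi_self))
    (aux_gI hρ hE hxc hxlow hW hWb b)
  rw [Set.Ioc_union_Ioi_eq_Ioi hab] at h
  linarith [h]

lemma aux_Ioc_bound {u : ℝ → ℝ} {c a b : ℝ} (hab : a ≤ b) (hc : 0 ≤ c)
    (hu : IntegrableOn u (Set.Ioc a b) volume)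
    (hb : ∀ᵐ σ ∂(volume.restrict (Set.Ioc a b)), |u σ| ≤ c) :
    |∫ σ in Set.Ioc a b, u σ| ≤ c * (b - a) := by
  calc |∫ σ in Set.Ioc a b, u σ| ≤ ∫ σ in Set.Ioc a b, ‖u σ‖ := by
        rw [← Real.norm_eq_abs]; exact norm_integral_le_integral_norm _
    _ ≤ ∫ _σ in Set.Ioc a b, c := by
        refine integral_mono_ae hu.norm (integrableOn_const ?_) ?_
        · rw [Real.volume_Ioc]; exact ENNReal.ofReal_ne_top
        · filter_upwards [hb] with σ h1
          simpa using h1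
    _ = c * (b - a) := by
        simp [setIntegral_const, Real.volume_Ioc, ENNReal.toReal_ofReal (sub_nonneg.2 hab),
          smul_eq_mul, mul_comm, hab]

end AuxSide

section AuxSplit

variable {ρ E : ℝ} {x W : ℝ → ℝ}

lemma aux_split1 (hρ : 0 < ρ) (hE : 0 ≤ E) (hxc : Continuous x)
    (hxlow : ∀ a b : ℝ, a ≤ b → ρ * (b - a) ≤ x b - x a)
    (hW : AEStronglyMeasurable W volume)
    (hWb : ∀ᵐ σ ∂(volume : Measure ℝ), |W σ| ≤ E) (s : ℝ) :
    ∫ σ, (1 / 2) * Real.sign (x s - x σ) * Real.exp (-|x s - x σ|) * W σ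
      = (1 / 2) * Real.exp (-x s) * (∫ σ in Set.Iic s, Real.exp (x σ) * W σ)
        - (1 / 2) * Real.exp (x s) * (∫ σ in Set.Ioi s, Real.exp (-x σ) * W σ) := by
  set u : ℝ → ℝ := fun σ => (1 / 2) * Real.sign (x s - x σ) * Real.exp (-|x s - x σ|) * W σ
    with hu
  have hne : ∀ᵐ σ ∂(volume : Measure ℝ), σ ≠ s := by
    rw [ae_iff]
    convert Real.volume_singleton (a := s) using 2
    ext σ; simp
  have heqIic : ∀ᵐ σ ∂(volume.restrict (Set.Iic s)),
      u σ = (1 / 2) * Real.exp (-x s) * (Real.exp (x σ) * W σ) := by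
    filter_upwards [ae_restrict_of_ae hne, ae_restrict_mem measurableSet_Iic] with σ h1 h2
    have hlt : σ < s := lt_of_le_of_ne h2 h1
    have hpos : 0 < x s - x σ :=
      lt_of_lt_of_le (by nlinarith) (hxlow σ s hlt.le)
    rw [hu]
    simp only
    rw [Real.sign_of_pos hpos, abs_of_pos hpos, show -(x s - x σ) = -x s + x σ by ring,
      Real.exp_add]
    ring
  have heqIoi : ∀ᵐ σ ∂(volume.restrict (Set.Ioi s)),
      u σ = -((1 / 2) * Real.exp (x s)) * (Real.exp (-x σ) * W σ) := by
    filter_upwards [ae_restrict_mem measurableSet_Ioi] with σ h2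
    have hlt : x s - x σ < 0 := by
      have := hxlow s σ (le_of_lt h2)
      nlinarith [mul_pos hρ (sub_pos.2 (Set.mem_Ioi.1 h2))]
    rw [hu]
    simp only
    rw [Real.sign_of_neg hlt, abs_of_neg hlt, show - -(x s - x σ) = x s + -x σ by ring,
      Real.exp_add]
    ring
  have hintIic : IntegrableOn u (Set.Iic s) volume :=
    (((aux_fI hρ hE hxc hxlow hW hWb s).const_mul ((1 / 2) * Real.exp (-x s))).congr
      (heqIic.mono fun σ h => h.symm))
  have hintIoi : IntegrableOn u (Set.Ioi s) volume :=
    (((aux_gI hρ hE hxc hxlow hW hWb s).const_mul (-((1 / 2) * Real.exp (x s)))).congr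
      (heqIoi.mono fun σ h => h.symm))
  rw [← intervalIntegral.integral_Iic_add_Ioi (b := s) hintIic hintIoi]
  rw [integral_congr_ae heqIic, integral_congr_ae heqIoi, MeasureTheory.integral_const_mul, MeasureTheory.integral_const_mul]
  ring

lemma aux_split2 (hρ : 0 < ρ) (hE : 0 ≤ E) (hxc : Continuous x)
    (hxlow : ∀ a b : ℝ, a ≤ b → ρ * (b - a) ≤ x b - x a)
    (hW : AEStronglyMeasurable W volume)
    (hWb : ∀ᵐ σ ∂(volume : Measure ℝ), |W σ| ≤ E) (s : ℝ) :
    ∫ σ, (1 / 2) * Real.exp (-|x s - x σ|) * W σ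
      = (1 / 2) * Real.exp (-x s) * (∫ σ in Set.Iic s, Real.exp (x σ) * W σ)
        + (1 / 2) * Real.exp (x s) * (∫ σ in Set.Ioi s, Real.exp (-x σ) * W σ) := by
  set u : ℝ → ℝ := fun σ => (1 / 2) * Real.exp (-|x s - x σ|) * W σ with hu
  have heqIic : ∀ᵐ σ ∂(volume.restrict (Set.Iic s)),
      u σ = (1 / 2) * Real.exp (-x s) * (Real.exp (x σ) * W σ) := by
    filter_upwards [ae_restrict_mem measurableSet_Iic] with σ h2
    have h2' : σ ≤ s := h2
    have hge : 0 ≤ x s - x σ :=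
      le_trans (mul_nonneg hρ.le (by linarith)) (hxlow σ s h2')
    rw [hu]
    simp only
    rw [abs_of_nonneg hge, show -(x s - x σ) = -x s + x σ by ring, Real.exp_add]
    ring
  have heqIoi : ∀ᵐ σ ∂(volume.restrict (Set.Ioi s)),
      u σ = ((1 / 2) * Real.exp (x s)) * (Real.exp (-x σ) * W σ) := by
    filter_upwards [ae_restrict_mem measurableSet_Ioi] with σ h2
    have hlt : x s - x σ < 0 := by
      have := hxlow s σ (le_of_lt h2)
      nlinarith [mul_pos hρ (sub_pos.2 (Set.mem_Ioi.1 h2))]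
    rw [hu]
    simp only
    rw [abs_of_neg hlt, show - -(x s - x σ) = x s + -x σ by ring, Real.exp_add]
    ring
  have hintIic : IntegrableOn u (Set.Iic s) volume :=
    (((aux_fI hρ hE hxc hxlow hW hWb s).const_mul ((1 / 2) * Real.exp (-x s))).congr
      (heqIic.mono fun σ h => h.symm))
  have hintIoi : IntegrableOn u (Set.Ioi s) volume :=
    (((aux_gI hρ hE hxc hxlow hW hWb s).const_mul ((1 / 2) * Real.exp (x s))).congr
      (heqIoi.mono fun σ h => h.symm))
  rw [← intervalIntegral.integral_Iic_add_Ioi (b := s) hintIic hintIoi]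
  rw [integral_congr_ae heqIic, integral_congr_ae heqIoi, MeasureTheory.integral_const_mul, MeasureTheory.integral_const_mul]

end AuxSplit
open MeasureTheory

/-- The map `F₁(s) = −∫ G'(x(s) − x(σ))·M(σ)·(1 + ξ'(σ)) dσ` is Lipschitz
and bounded, and for a.e. `s` it is differentiable with
`F₁'(s) = (M(s) − ∫ G(x(s) − x(σ))·M(σ)·(1 + ξ'(σ)) dσ)·(1 + ξ'(s))`. -/
theorem stmt_13 (ρ : ℝ) (hρ : 0 < ρ) (ξ ξ' : ℝ → ℝ) (L : ℝ) (hL : 0 ≤ L)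
    (hlip : ∀ a b : ℝ, |ξ a - ξ b| ≤ L * |a - b|)
    (hderiv : ∀ᵐ σ ∂volume, HasDerivAt ξ (ξ' σ) σ)
    (hlow : ∀ᵐ σ ∂volume, ρ ≤ 1 + ξ' σ)
    (x : ℝ → ℝ) (hx : ∀ s, x s = s + ξ s)
    (M : ℝ → ℝ) (hMm : Measurable M)
    (hMb : BddAbove (Set.range fun σ => |M σ|))
    (hM2 : Integrable (fun σ => (M σ) ^ 2) volume)
    (F₁ : ℝ → ℝ)
    (hF₁ : ∀ s, F₁ s =
      -∫ σ, (-(1 / 2) * Real.sign (x s - x σ) * Real.exp (-|x s - x σ|)) *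
        M σ * (1 + ξ' σ)) :
    (∃ K : ℝ, 0 ≤ K ∧ ∀ a b : ℝ, |F₁ a - F₁ b| ≤ K * |a - b|) ∧
    (∃ C : ℝ, ∀ s : ℝ, |F₁ s| ≤ C) ∧
    (∀ᵐ s ∂volume, HasDerivAt F₁
      ((M s - ∫ σ, (1 / 2) * Real.exp (-|x s - x σ|) * M σ * (1 + ξ' σ)) *
        (1 + ξ' s)) s) := by
  classical
  obtain ⟨C, hCub⟩ := hMb
  have hMC : ∀ σ, |M σ| ≤ C := fun σ => hCub ⟨σ, rfl⟩
  have hC0 : 0 ≤ C := le_trans (abs_nonneg _) (hMC 0)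
  set D : ℝ := 1 + L with hD
  have hD0 : (0:ℝ) < D := by rw [hD]; linarith
  set E : ℝ := C * D with hE'
  have hE : 0 ≤ E := by positivity
  set W : ℝ → ℝ := fun σ => M σ * (1 + ξ' σ) with hW'
  -- a.e. bound on ξ'
  have hξb : ∀ᵐ σ ∂(volume : Measure ℝ), |ξ' σ| ≤ L := by
    filter_upwards [hderiv] with σ hσ
    have h1 := (hasDerivAt_iff_tendsto_slope.mp hσ).abs
    refine le_of_tendsto h1 ?_
    filter_upwards [eventually_mem_nhdsWithin] with t ht
    have htσ : t ≠ σ := by simpa using ht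
    rw [slope_def_field, abs_div, div_le_iff₀ (abs_pos.2 (sub_ne_zero.2 htσ))]
    exact hlip t σ
  have hWb : ∀ᵐ σ ∂(volume : Measure ℝ), |W σ| ≤ E := by
    filter_upwards [hξb] with σ h1
    rw [hW']
    simp only
    rw [abs_mul, hE']
    have h2 : |1 + ξ' σ| ≤ D := by
      rw [hD]
      calc |1 + ξ' σ| ≤ |(1:ℝ)| + |ξ' σ| := abs_add_le _ _
        _ ≤ 1 + L := by rw [abs_one]; linarith
    exact mul_le_mul (hMC σ) h2 (abs_nonneg _) hC0
  -- measurability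
  have hξ'ae : AEMeasurable ξ' volume := by
    have h1 : deriv ξ =ᵐ[volume] ξ' := hderiv.mono fun σ h => h.deriv
    exact (measurable_deriv ξ).aemeasurable.congr h1
  have hWm : AEStronglyMeasurable W volume :=
    (hMm.aemeasurable.mul (aemeasurable_const.add hξ'ae)).aestronglyMeasurable
  -- continuity of ξ and x
  have hξc : Continuous ξ := by
    have hlw : LipschitzWith (Real.toNNReal L) ξ :=
      LipschitzWith.of_dist_le_mul (fun a b => by
        simp only [Real.dist_eq, Real.coe_toNNReal L hL]; exact hlip a b)
    exact hlw.continuous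
  have hxc : Continuous x := by
    have hxe : x = fun s => s + ξ s := funext hx
    rw [hxe]; exact continuous_id.add hξc
  -- integrability of ξ' on bounded intervals
  have hξint : ∀ a b : ℝ, IntegrableOn ξ' (Set.Ioc a b) volume := by
    intro a b
    refine Integrable.mono' (g := fun _ => L) (integrableOn_const ?_)
      hξ'ae.aestronglyMeasurable.restrict ?_
    · rw [Real.volume_Ioc]; exact ENNReal.ofReal_ne_top
    · exact ae_restrict_of_ae (hξb.mono fun σ h => by rwa [Real.norm_eq_abs])
  -- FTC and bounds on x
  have hftc := aux_ftc hL hlip hderiv hξint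
  have hxlow : ∀ a b : ℝ, a ≤ b → ρ * (b - a) ≤ x b - x a := by
    intro a b hab
    have h1 : ξ b - ξ a = ∫ σ in Set.Ioc a b, ξ' σ := hftc a b hab
    have h2 : ∫ _σ in Set.Ioc a b, (ρ - 1 : ℝ) ≤ ∫ σ in Set.Ioc a b, ξ' σ := by
      refine integral_mono_ae (integrableOn_const ?_) (hξint a b) ?_
      · rw [Real.volume_Ioc]; exact ENNReal.ofReal_ne_top
      · exact ae_restrict_of_ae (hlow.mono fun σ h => show (ρ - 1 : ℝ) ≤ ξ' σ by linarith)
    have h3 : ∫ _σ in Set.Ioc a b, (ρ - 1 : ℝ) = (ρ - 1) * (b - a) := by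
      simp [Real.volume_Ioc, ENNReal.toReal_ofReal (sub_nonneg.2 hab), mul_comm, hab]
    rw [h3] at h2
    have h4 : (ρ - 1) * (b - a) = ρ * (b - a) - (b - a) := by ring
    rw [hx a, hx b]
    linarith [h1, h2, h4]
  have hxup : ∀ a b : ℝ, a ≤ b → x b - x a ≤ D * (b - a) := by
    intro a b hab
    have habs : |ξ b - ξ a| ≤ L * (b - a) := by
      calc |ξ b - ξ a| ≤ L * |b - a| := hlip b a
        _ = L * (b - a) := by rw [abs_of_nonneg (sub_nonneg.2 hab)]
    have h5 := (abs_le.1 habs).2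
    rw [hx a, hx b, hD]
    nlinarith
  have hxmono : ∀ a b : ℝ, a ≤ b → x a ≤ x b := fun a b hab => by
    nlinarith [hxlow a b hab, mul_nonneg hρ.le (sub_nonneg.2 hab)]
  -- main objects
  set f : ℝ → ℝ := fun σ => Real.exp (x σ) * W σ with hf'
  set g : ℝ → ℝ := fun σ => Real.exp (-x σ) * W σ with hg'
  set A : ℝ → ℝ := fun s => ∫ σ in Set.Iic s, f σ with hA'
  set B : ℝ → ℝ := fun s => ∫ σ in Set.Ioi s, g σ with hB'
  have hrep : ∀ s, F₁ s
      = 1 / 2 * Real.exp (-x s) * A s - 1 / 2 * Real.exp (x s) * B s := by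
    intro s
    rw [hF₁ s]
    have h1 : (∫ σ, (-(1 / 2) * Real.sign (x s - x σ) * Real.exp (-|x s - x σ|)) *
        M σ * (1 + ξ' σ))
        = ∫ σ, -(1 / 2 * Real.sign (x s - x σ) * Real.exp (-|x s - x σ|) * W σ) :=
      integral_congr_ae (Filter.Eventually.of_forall fun σ => by rw [hW']; ring)
    rw [h1, MeasureTheory.integral_neg, neg_neg]
    exact aux_split1 hρ hE hxc hxlow hWm hWb s
  have hAb : ∀ s, |A s| ≤ E * Real.exp (x s) * ρ⁻¹ :=
    fun s => aux_fI_bound hρ hE hxc hxlow hWm hWb s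
  have hBb : ∀ s, |B s| ≤ E * Real.exp (-x s) * ρ⁻¹ :=
    fun s => aux_gI_bound hρ hE hxc hxlow hWm hWb s
  have hAd : ∀ a b : ℝ, a ≤ b → A b - A a = ∫ σ in Set.Ioc a b, f σ :=
    fun a b hab => aux_f_diff hρ hE hxc hxlow hWm hWb hab
  have hBd : ∀ a b : ℝ, a ≤ b → B a - B b = ∫ σ in Set.Ioc a b, g σ :=
    fun a b hab => aux_g_diff hρ hE hxc hxlow hWm hWb hab
  have hAdb : ∀ a b : ℝ, a ≤ b → |A b - A a| ≤ E * Real.exp (x b) * (b - a) := by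
    intro a b hab
    rw [hAd a b hab]
    refine aux_Ioc_bound hab (by positivity)
      ((aux_fI hρ hE hxc hxlow hWm hWb b).mono_set Set.Ioc_subset_Iic_self) ?_
    filter_upwards [ae_restrict_of_ae hWb, ae_restrict_mem measurableSet_Ioc] with σ h1 h2
    rw [hf']
    simp only
    rw [abs_mul, abs_of_pos (Real.exp_pos _)]
    calc Real.exp (x σ) * |W σ| ≤ Real.exp (x b) * E :=
          mul_le_mul (Real.exp_le_exp.2 (hxmono σ b h2.2)) h1 (abs_nonneg _)
            (Real.exp_pos _).le
      _ = E * Real.exp (x b) := mul_comm _ _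
  have hBdb : ∀ a b : ℝ, a ≤ b → |B a - B b| ≤ E * Real.exp (-x a) * (b - a) := by
    intro a b hab
    rw [hBd a b hab]
    refine aux_Ioc_bound hab (by positivity)
      ((aux_gI hρ hE hxc hxlow hWm hWb a).mono_set Set.Ioc_subset_Ioi_self) ?_
    filter_upwards [ae_restrict_of_ae hWb, ae_restrict_mem measurableSet_Ioc] with σ h1 h2
    rw [hg']
    simp only
    rw [abs_mul, abs_of_pos (Real.exp_pos _)]
    calc Real.exp (-x σ) * |W σ| ≤ Real.exp (-x a) * E :=
          mul_le_mul (Real.exp_le_exp.2 (neg_le_neg (hxmono a σ h2.1.le))) h1 (abs_nonneg _)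
            (Real.exp_pos _).le
      _ = E * Real.exp (-x a) := mul_comm _ _
  -- Lipschitz
  set K : ℝ := E + E * D * ρ⁻¹ with hK'
  have hK0 : 0 ≤ K := by positivity
  have hone : ∀ a b : ℝ, a ≤ b → |F₁ b - F₁ a| ≤ K * (b - a) := by
    intro a b hab
    have hxab := hxmono a b hab
    have hx1 : Real.exp (-x b) * Real.exp (x b) = 1 := by
      rw [← Real.exp_add]; simp
    have hx2 : Real.exp (x a) * Real.exp (-x a) = 1 := by
      rw [← Real.exp_add]; simp
    have e1 : F₁ b - F₁ a
        = (1 / 2 * Real.exp (-x b) * (A b - A a)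
            + 1 / 2 * (Real.exp (-x b) - Real.exp (-x a)) * A a)
          - (1 / 2 * Real.exp (x a) * (B b - B a)
            + 1 / 2 * (Real.exp (x b) - Real.exp (x a)) * B b) := by
      rw [hrep a, hrep b]; ring
    -- elementary exponential estimates
    have hed1 : |Real.exp (-x b) - Real.exp (-x a)| ≤ Real.exp (-x a) * (D * (b - a)) := by
      rw [abs_sub_comm, abs_of_nonneg (sub_nonneg.2 (Real.exp_le_exp.2 (neg_le_neg hxab)))]
      have h5 : Real.exp (-x b) = Real.exp (-x a) * Real.exp (x a - x b) := by
        rw [← Real.exp_add]; ring_nf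
      have h6 : 1 - Real.exp (x a - x b) ≤ x b - x a := by
        have := Real.add_one_le_exp (x a - x b); linarith
      have h7 : x b - x a ≤ D * (b - a) := hxup a b hab
      nlinarith [Real.exp_pos (-x a)]
    have hed2 : |Real.exp (x b) - Real.exp (x a)| ≤ Real.exp (x b) * (D * (b - a)) := by
      rw [abs_of_nonneg (sub_nonneg.2 (Real.exp_le_exp.2 hxab))]
      have h5 : Real.exp (x a) = Real.exp (x b) * Real.exp (x a - x b) := by
        rw [← Real.exp_add]; ring_nf
      have h6 : 1 - Real.exp (x a - x b) ≤ x b - x a := by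
        have := Real.add_one_le_exp (x a - x b); linarith
      have h7 : x b - x a ≤ D * (b - a) := hxup a b hab
      nlinarith [Real.exp_pos (x b)]
    have t1 : |1 / 2 * Real.exp (-x b) * (A b - A a)| ≤ 1 / 2 * E * (b - a) := by
      rw [abs_mul, abs_mul, abs_of_pos (by norm_num : (0:ℝ) < 1 / 2),
        abs_of_pos (Real.exp_pos _)]
      calc 1 / 2 * Real.exp (-x b) * |A b - A a|
          ≤ 1 / 2 * Real.exp (-x b) * (E * Real.exp (x b) * (b - a)) := by
            apply mul_le_mul_of_nonneg_left (hAdb a b hab) (by positivity)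
        _ = 1 / 2 * E * (b - a) * (Real.exp (-x b) * Real.exp (x b)) := by ring
        _ = 1 / 2 * E * (b - a) := by rw [hx1, mul_one]
    have t2 : |1 / 2 * (Real.exp (-x b) - Real.exp (-x a)) * A a|
        ≤ 1 / 2 * (E * D * ρ⁻¹) * (b - a) := by
      rw [abs_mul, abs_mul, abs_of_pos (by norm_num : (0:ℝ) < 1 / 2)]
      calc 1 / 2 * |Real.exp (-x b) - Real.exp (-x a)| * |A a|
          ≤ 1 / 2 * (Real.exp (-x a) * (D * (b - a))) * (E * Real.exp (x a) * ρ⁻¹) := by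
            exact mul_le_mul (mul_le_mul_of_nonneg_left hed1 (by norm_num)) (hAb a)
              (abs_nonneg _) (mul_nonneg (by norm_num)
                (mul_nonneg (Real.exp_pos _).le (mul_nonneg hD0.le (sub_nonneg.2 hab))))
        _ = 1 / 2 * (E * D * ρ⁻¹) * (b - a) * (Real.exp (x a) * Real.exp (-x a)) := by ring
        _ = 1 / 2 * (E * D * ρ⁻¹) * (b - a) := by rw [hx2, mul_one]
    have t3 : |1 / 2 * Real.exp (x a) * (B b - B a)| ≤ 1 / 2 * E * (b - a) := by
      rw [abs_mul, abs_mul, abs_of_pos (by norm_num : (0:ℝ) < 1 / 2),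
        abs_of_pos (Real.exp_pos _)]
      rw [abs_sub_comm]
      calc 1 / 2 * Real.exp (x a) * |B a - B b|
          ≤ 1 / 2 * Real.exp (x a) * (E * Real.exp (-x a) * (b - a)) := by
            apply mul_le_mul_of_nonneg_left (hBdb a b hab) (by positivity)
        _ = 1 / 2 * E * (b - a) * (Real.exp (x a) * Real.exp (-x a)) := by ring
        _ = 1 / 2 * E * (b - a) := by rw [hx2, mul_one]
    have t4 : |1 / 2 * (Real.exp (x b) - Real.exp (x a)) * B b|
        ≤ 1 / 2 * (E * D * ρ⁻¹) * (b - a) := by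
      rw [abs_mul, abs_mul, abs_of_pos (by norm_num : (0:ℝ) < 1 / 2)]
      have hx3 : Real.exp (x b) * Real.exp (-x b) = 1 := by rw [← Real.exp_add]; simp
      calc 1 / 2 * |Real.exp (x b) - Real.exp (x a)| * |B b|
          ≤ 1 / 2 * (Real.exp (x b) * (D * (b - a))) * (E * Real.exp (-x b) * ρ⁻¹) := by
            exact mul_le_mul (mul_le_mul_of_nonneg_left hed2 (by norm_num)) (hBb b)
              (abs_nonneg _) (mul_nonneg (by norm_num)
                (mul_nonneg (Real.exp_pos _).le (mul_nonneg hD0.le (sub_nonneg.2 hab))))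
        _ = 1 / 2 * (E * D * ρ⁻¹) * (b - a) * (Real.exp (x b) * Real.exp (-x b)) := by ring
        _ = 1 / 2 * (E * D * ρ⁻¹) * (b - a) := by rw [hx3, mul_one]
    rw [e1]
    have tr1 : ∀ X Y : ℝ, |X - Y| ≤ |X| + |Y| := fun X Y => abs_sub X Y
    calc |(1 / 2 * Real.exp (-x b) * (A b - A a)
            + 1 / 2 * (Real.exp (-x b) - Real.exp (-x a)) * A a)
          - (1 / 2 * Real.exp (x a) * (B b - B a)
            + 1 / 2 * (Real.exp (x b) - Real.exp (x a)) * B b)|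
        ≤ |1 / 2 * Real.exp (-x b) * (A b - A a)
            + 1 / 2 * (Real.exp (-x b) - Real.exp (-x a)) * A a|
          + |1 / 2 * Real.exp (x a) * (B b - B a)
            + 1 / 2 * (Real.exp (x b) - Real.exp (x a)) * B b| := tr1 _ _
      _ ≤ (|1 / 2 * Real.exp (-x b) * (A b - A a)|
            + |1 / 2 * (Real.exp (-x b) - Real.exp (-x a)) * A a|)
          + (|1 / 2 * Real.exp (x a) * (B b - B a)|
            + |1 / 2 * (Real.exp (x b) - Real.exp (x a)) * B b|) :=
          add_le_add (abs_add_le _ _) (abs_add_le _ _)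
      _ ≤ (1 / 2 * E * (b - a) + 1 / 2 * (E * D * ρ⁻¹) * (b - a))
          + (1 / 2 * E * (b - a) + 1 / 2 * (E * D * ρ⁻¹) * (b - a)) := by
          exact add_le_add (add_le_add t1 t2) (add_le_add t3 t4)
      _ = K * (b - a) := by rw [hK']; ring
  refine ⟨⟨K, hK0, ?_⟩, ⟨E * ρ⁻¹, ?_⟩, ?_⟩
  · intro a b
    rcases le_total a b with h | h
    · rw [abs_sub_comm, abs_of_nonpos (sub_nonpos.2 h), neg_sub]
      exact hone a b h
    · rw [abs_of_nonneg (sub_nonneg.2 h)]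
      exact hone b a h
  · intro s
    rw [hrep s]
    have hx1 : Real.exp (-x s) * Real.exp (x s) = 1 := by rw [← Real.exp_add]; simp
    have b1 : |1 / 2 * Real.exp (-x s) * A s| ≤ 1 / 2 * E * ρ⁻¹ := by
      rw [abs_mul, abs_mul, abs_of_pos (by norm_num : (0:ℝ) < 1 / 2),
        abs_of_pos (Real.exp_pos _)]
      calc 1 / 2 * Real.exp (-x s) * |A s|
          ≤ 1 / 2 * Real.exp (-x s) * (E * Real.exp (x s) * ρ⁻¹) :=
            mul_le_mul_of_nonneg_left (hAb s) (by positivity)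
        _ = 1 / 2 * E * ρ⁻¹ * (Real.exp (-x s) * Real.exp (x s)) := by ring
        _ = 1 / 2 * E * ρ⁻¹ := by rw [hx1, mul_one]
    have b2 : |1 / 2 * Real.exp (x s) * B s| ≤ 1 / 2 * E * ρ⁻¹ := by
      rw [abs_mul, abs_mul, abs_of_pos (by norm_num : (0:ℝ) < 1 / 2),
        abs_of_pos (Real.exp_pos _)]
      have hx3 : Real.exp (x s) * Real.exp (-x s) = 1 := by rw [← Real.exp_add]; simp
      calc 1 / 2 * Real.exp (x s) * |B s|
          ≤ 1 / 2 * Real.exp (x s) * (E * Real.exp (-x s) * ρ⁻¹) :=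
            mul_le_mul_of_nonneg_left (hBb s) (by positivity)
        _ = 1 / 2 * E * ρ⁻¹ * (Real.exp (x s) * Real.exp (-x s)) := by ring
        _ = 1 / 2 * E * ρ⁻¹ := by rw [hx3, mul_one]
    calc |1 / 2 * Real.exp (-x s) * A s - 1 / 2 * Real.exp (x s) * B s|
        ≤ |1 / 2 * Real.exp (-x s) * A s| + |1 / 2 * Real.exp (x s) * B s| := abs_sub _ _
      _ ≤ 1 / 2 * E * ρ⁻¹ + 1 / 2 * E * ρ⁻¹ := add_le_add b1 b2
      _ = E * ρ⁻¹ := by ring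
  -- derivative
  · have hflocal : LocallyIntegrable f volume := fun x₀ =>
      ⟨Set.Iic (x₀ + 1), Iic_mem_nhds (lt_add_one x₀), aux_fI hρ hE hxc hxlow hWm hWb _⟩
    have hglocal : LocallyIntegrable g volume := fun x₀ =>
      ⟨Set.Ici (x₀ - 1), Ici_mem_nhds (by linarith),
        (aux_gI hρ hE hxc hxlow hWm hWb (x₀ - 2)).mono_set
          (fun y hy => lt_of_lt_of_le (by linarith : x₀ - 2 < x₀ - 1) hy)⟩
    have hAder : ∀ᵐ s ∂(volume : Measure ℝ), HasDerivAt A (f s) s :=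
      aux_primitive_hasDerivAt hflocal (fun a b hab => hAd a b hab)
    have hBder : ∀ᵐ s ∂(volume : Measure ℝ), HasDerivAt (fun t => -B t) (g s) s :=
      aux_primitive_hasDerivAt hglocal (fun a b hab => by
        have h := hBd a b hab; linarith)
    filter_upwards [hderiv, hAder, hBder] with s hds hdA hdBneg
    have hdB : HasDerivAt B (-g s) s := by
      have := hdBneg.neg
      simp only [Pi.neg_def, neg_neg] at this; exact this
    have hdx : HasDerivAt x (1 + ξ' s) s := by
      have hxe : x = fun t => t + ξ t := funext hx
      rw [hxe]
      exact (hasDerivAt_id s).add hds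
    have hdexp1 : HasDerivAt (fun t => Real.exp (-x t))
        (Real.exp (-x s) * -(1 + ξ' s)) s := hdx.neg.exp
    have hdexp2 : HasDerivAt (fun t => Real.exp (x t))
        (Real.exp (x s) * (1 + ξ' s)) s := hdx.exp
    have hdF := ((hdexp1.const_mul ((1:ℝ) / 2)).mul hdA).sub
      ((hdexp2.const_mul ((1:ℝ) / 2)).mul hdB)
    have hFeq : F₁ = fun t => 1 / 2 * Real.exp (-x t) * A t - 1 / 2 * Real.exp (x t) * B t :=
      funext hrep
    rw [hFeq]
    have hsplit2 : (∫ σ, (1 / 2) * Real.exp (-|x s - x σ|) * M σ * (1 + ξ' σ))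
        = 1 / 2 * Real.exp (-x s) * A s + 1 / 2 * Real.exp (x s) * B s := by
      have h1 : (∫ σ, (1 / 2) * Real.exp (-|x s - x σ|) * M σ * (1 + ξ' σ))
          = ∫ σ, (1 / 2) * Real.exp (-|x s - x σ|) * W σ :=
        integral_congr_ae (Filter.Eventually.of_forall fun σ => by rw [hW']; ring)
      rw [h1]
      exact aux_split2 hρ hE hxc hxlow hWm hWb s
    refine hdF.congr_deriv (Eq.symm ?_)
    rw [hsplit2]
    have hx1 : Real.exp (-x s) * Real.exp (x s) = 1 := by rw [← Real.exp_add]; simp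
    rw [hf', hg', hW']
    simp only
    linear_combination (-(M s * (1 + ξ' s))) * hx1
end

section
/- Let θ ∈ (0, 1) and let m be a positive integer. Define φ_m : ℝ → ℝ by φ_m(x) = 1 for x ≤ 0, φ_m(x) = exp(θx) for 0 < x ≤ m, and φ_m(x) = exp(θm) for x ≥ m. Then for every x ∈ ℝ, φ_m(x)·∫_{−∞}^{∞} exp(−|x − y|)·(1/φ_m(y)) dy ≤ 4/(1 − θ). -/
open MeasureTheory Set

private lemma aux_integrable {c : ℝ} (hc : 0 < c) :
    Integrable (fun t : ℝ => Real.exp (-(c * |t|))) := by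
  have hIoi : IntegrableOn (fun t : ℝ => Real.exp (-(c * |t|))) (Ioi 0) := by
    apply ((exp_neg_integrableOn_Ioi 0 hc).congr_fun ?_ measurableSet_Ioi)
    intro t ht
    simp only []; rw [abs_of_pos (mem_Ioi.mp ht), neg_mul]
  have hIic : IntegrableOn (fun t : ℝ => Real.exp (-(c * |t|))) (Iic 0) := by
    rw [← Measure.map_neg_eq_self (volume : Measure ℝ)]
    have m : MeasurableEmbedding fun x : ℝ => -x := (Homeomorph.neg ℝ).measurableEmbedding
    rw [m.integrableOn_map_iff]
    simp_rw [Function.comp_def, abs_neg, neg_preimage, neg_Iic, neg_zero]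
    exact Iff.mpr integrableOn_Ici_iff_integrableOn_Ioi hIoi
  have := hIic.union hIoi
  rwa [Iic_union_Ioi, integrableOn_univ] at this

private lemma aux_integral {c : ℝ} (hc : 0 < c) :
    ∫ t : ℝ, Real.exp (-(c * |t|)) = 2 / c := by
  have h1 : ∫ t : ℝ, Real.exp (-(c * |t|)) = 2 * ∫ t in Ioi (0:ℝ), Real.exp (-(c * t)) :=
    integral_comp_abs (f := fun u => Real.exp (-(c * u)))
  have h2 : ∫ t in Ioi (0:ℝ), Real.exp (-(c * t)) = c⁻¹ := by
    have := integral_comp_mul_left_Ioi (fun u => Real.exp (-u)) 0 hc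
    simp only [mul_zero] at this
    rw [this, integral_exp_neg_Ioi]
    simp [Real.exp_zero, smul_eq_mul]
  rw [h1, h2]
  ring

/-- For the truncated exponential weight `φ_m` (with `θ ∈ (0,1)` and
`m ∈ ℤ⁺`), one has `φ_m(x)·∫ exp(−|x − y|)·φ_m(y)⁻¹ dy ≤ 4/(1 − θ)` for every `x`. -/
theorem stmt_14 (θ : ℝ) (hθ₀ : 0 < θ) (hθ₁ : θ < 1) (m : ℕ) (hm : 0 < m)
    (φ : ℝ → ℝ)
    (hφ₁ : ∀ x : ℝ, x ≤ 0 → φ x = 1)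
    (hφ₂ : ∀ x : ℝ, 0 < x → x ≤ (m : ℝ) → φ x = Real.exp (θ * x))
    (hφ₃ : ∀ x : ℝ, (m : ℝ) ≤ x → φ x = Real.exp (θ * m)) :
    ∀ x : ℝ, φ x * (∫ y, Real.exp (-|x - y|) * (φ y)⁻¹) ≤ 4 / (1 - θ) := by
  intro x
  set c : ℝ := 1 - θ with hc_def
  have hc : 0 < c := by simp [hc_def]; linarith
  have hm' : (0:ℝ) ≤ (m:ℝ) := Nat.cast_nonneg m
  -- clamp description of φ
  set cl : ℝ → ℝ := fun y => min (max y 0) (m:ℝ) with hcl_def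
  have hφeq : ∀ y, φ y = Real.exp (θ * cl y) := by
    intro y
    rcases le_or_gt y 0 with h | h
    · rw [hφ₁ y h]
      simp [hcl_def, max_eq_right h, min_eq_left hm', Real.exp_zero]
    · rcases le_or_gt y (m:ℝ) with h2 | h2
      · rw [hφ₂ y h h2]
        simp [hcl_def, max_eq_left h.le, min_eq_left h2]
      · rw [hφ₃ y h2.le]
        simp [hcl_def, max_eq_left (le_trans hm' h2.le), min_eq_right h2.le]
  have hlip : ∀ a b : ℝ, |cl a - cl b| ≤ |a - b| := by
    intro a b
    calc |cl a - cl b| ≤ max |max a 0 - max b 0| |(m:ℝ) - (m:ℝ)| :=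
          abs_min_sub_min_le_max _ _ _ _
      _ ≤ |a - b| := by
          rw [sub_self, abs_zero]
          exact max_le (abs_max_sub_max_le_abs a b 0) (abs_nonneg _)
  -- the dominating function
  set g : ℝ → ℝ := fun y => Real.exp (-(c * |y - x|)) with hg_def
  have hg_int : Integrable g := (aux_integrable hc).comp_sub_right x
  have hg_val : ∫ y, g y = 2 / c := by
    rw [hg_def]
    have := integral_sub_right_eq_self (μ := volume) (fun t : ℝ => Real.exp (-(c * |t|))) x
    rw [this, aux_integral hc]
  -- pointwise key bound
  have key : ∀ y, φ x * (Real.exp (-|x - y|) * (φ y)⁻¹) ≤ g y := by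
    intro y
    rw [hφeq x, hφeq y, ← Real.exp_neg, ← Real.exp_add, ← Real.exp_add, hg_def]
    apply Real.exp_le_exp.mpr
    have h1 : θ * cl x - θ * cl y ≤ θ * |x - y| := by
      have := (abs_le.mp (hlip x y)).2
      nlinarith [hθ₀.le]
    have hxy : |y - x| = |x - y| := abs_sub_comm y x
    rw [hxy]
    simp only [hc_def]
    nlinarith [abs_nonneg (x - y)]
  -- positivity facts
  have hφpos : ∀ y, 0 < φ y := fun y => by rw [hφeq y]; exact Real.exp_pos _
  have hφ_one : ∀ y, 1 ≤ φ y := by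
    intro y
    rw [hφeq y]
    have : 0 ≤ cl y := le_min (le_max_right _ _) hm'
    calc (1:ℝ) = Real.exp 0 := Real.exp_zero.symm
      _ ≤ _ := Real.exp_le_exp.mpr (by positivity)
  set f : ℝ → ℝ := fun y => Real.exp (-|x - y|) * (φ y)⁻¹ with hf_def
  have hf_nonneg : ∀ y, 0 ≤ f y := fun y =>
    mul_nonneg (Real.exp_pos _).le (inv_nonneg.mpr (hφpos y).le)
  have hf_le_g : ∀ y, f y ≤ g y := by
    intro y
    calc f y ≤ φ x * f y := le_mul_of_one_le_left (hf_nonneg y) (hφ_one x)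
      _ ≤ g y := key y
  have hf_meas : AEStronglyMeasurable f volume := by
    have : f = fun y => Real.exp (-|x - y| + -(θ * cl y)) := by
      funext y
      rw [hf_def]
      simp only [hφeq y, Real.exp_add, ← Real.exp_neg]
    rw [this]
    apply Continuous.aestronglyMeasurable
    fun_prop
  have hf_int : Integrable f := by
    apply hg_int.mono' hf_meas
    filter_upwards with y
    rw [Real.norm_eq_abs, abs_of_nonneg (hf_nonneg y)]
    exact hf_le_g y
  calc φ x * ∫ y, f y = ∫ y, φ x * f y := (integral_const_mul _ _).symm
    _ ≤ ∫ y, g y := integral_mono (hf_int.const_mul _) hg_int key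
    _ = 2 / c := hg_val
    _ ≤ 4 / c := by gcongr; norm_num
    _ = 4 / (1 - θ) := rfl
end

section
/- Let θ ∈ (0, 1), let m be a positive integer, and define φ_m : ℝ → ℝ by φ_m(x) = 1 for x ≤ 0, φ_m(x) = exp(θx) for 0 < x ≤ m, and φ_m(x) = exp(θm) for x ≥ m. Let f : ℝ → ℝ be measurable with both sup |f| and sup |φ_m·f| finite. Then for every x ∈ ℝ: (i) φ_m(x)·| (1/2)∫ sgn(x − y)·exp(−|x − y|)·f(y)² dy | ≤ (4/(1 − θ))·(sup |φ_m f|)·(sup |f|); and (ii) φ_m(x)·| (1/2)∫ exp(−|x − y|)·f(y)² dy − f(x)² | ≤ (4/(1 − θ))·(sup |φ_m f|)·(sup |f|). -/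
open MeasureTheory

lemma sign_measurable' : Measurable Real.sign := by
  have h : Real.sign = fun r : ℝ => if r < 0 then (-1:ℝ) else if 0 < r then 1 else 0 :=
    funext fun r => rfl
  rw [h]
  exact Measurable.ite measurableSet_Iio measurable_const
    (Measurable.ite measurableSet_Ioi measurable_const measurable_const)

lemma abs_sign_le_one' (t : ℝ) : |Real.sign t| ≤ 1 := by
  rcases lt_trichotomy t 0 with h|h|h
  · simp [Real.sign_of_neg h]
  · simp [h, Real.sign_zero]
  · simp [Real.sign_of_pos h]

lemma integrable_exp_neg_mul_abs_sub' {a : ℝ} (ha : 0 < a) (x : ℝ) :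
    Integrable (fun y : ℝ => Real.exp (-(a * |x - y|))) := by
  have h1 : IntegrableOn (fun y : ℝ => Real.exp (-(a * |y|))) (Set.Ioi 0) := by
    refine (exp_neg_integrableOn_Ioi 0 ha).congr_fun (fun y hy => ?_) measurableSet_Ioi
    rw [abs_of_pos hy.out]; ring_nf
  have h2 : IntegrableOn (fun y : ℝ => Real.exp (-(a * |y|))) (Set.Iic 0) := by
    rw [← Measure.map_neg_eq_self (volume : Measure ℝ)]
    have m : MeasurableEmbedding fun x : ℝ => -x := (Homeomorph.neg ℝ).measurableEmbedding
    rw [m.integrableOn_map_iff]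
    simp_rw [Function.comp_def, abs_neg, Set.neg_preimage, Set.neg_Iic, neg_zero]
    exact Iff.mpr integrableOn_Ici_iff_integrableOn_Ioi h1
  have h3 : Integrable (fun y : ℝ => Real.exp (-(a * |y|))) := by
    rw [← integrableOn_univ, ← Set.Iic_union_Ioi (a := (0:ℝ))]
    exact h2.union h1
  have := h3.comp_sub_right x
  refine this.congr (Filter.Eventually.of_forall fun y => ?_)
  simp [abs_sub_comm]

lemma integral_exp_neg_mul_abs_sub' {a : ℝ} (ha : 0 < a) (x : ℝ) :
    ∫ y : ℝ, Real.exp (-(a * |x - y|)) = 2 / a := by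
  have h1 : ∫ y : ℝ, Real.exp (-(a * |x - y|)) = ∫ y : ℝ, Real.exp (-(a * |y|)) := by
    rw [show (fun y : ℝ => Real.exp (-(a * |x - y|))) =
        fun y : ℝ => Real.exp (-(a * |y - x|)) by
      funext y; rw [abs_sub_comm]]
    exact integral_sub_right_eq_self (fun y : ℝ => Real.exp (-(a * |y|))) x
  rw [h1]
  rw [show (∫ y : ℝ, Real.exp (-(a * |y|))) = ∫ y : ℝ, (fun t => Real.exp (-(a * t))) |y|
    from rfl]
  rw [integral_comp_abs (f := fun t : ℝ => Real.exp (-(a * t)))]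
  have h2 : (∫ y : ℝ in Set.Ioi 0, Real.exp (-(a * y)))
      = a⁻¹ • ∫ y : ℝ in Set.Ioi (a * 0), Real.exp (-y) :=
    integral_comp_mul_left_Ioi (fun t : ℝ => Real.exp (-t)) 0 ha
  rw [h2]
  rw [mul_zero, integral_exp_neg_Ioi, neg_zero, Real.exp_zero]
  rw [smul_eq_mul, mul_one]
  field_simp

/-- Weighted estimates `φ_m·|∂_xG ∗ f²| ≤ (4/(1−θ))·‖φ_m f‖_∞·‖f‖_∞`
and `φ_m·|G ∗ f² − f²| ≤ (4/(1−θ))·‖φ_m f‖_∞·‖f‖_∞` for the truncated exponential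
weight `φ_m`, where `G(y) = (1/2)·exp(−|y|)`. -/
theorem stmt_15 (θ : ℝ) (hθ₀ : 0 < θ) (hθ₁ : θ < 1) (m : ℕ) (hm : 0 < m)
    (φ : ℝ → ℝ)
    (hφ₁ : ∀ x : ℝ, x ≤ 0 → φ x = 1)
    (hφ₂ : ∀ x : ℝ, 0 < x → x ≤ (m : ℝ) → φ x = Real.exp (θ * x))
    (hφ₃ : ∀ x : ℝ, (m : ℝ) ≤ x → φ x = Real.exp (θ * m))
    (f : ℝ → ℝ) (hfm : Measurable f)
    (hfb : BddAbove (Set.range fun x => |f x|))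
    (hφfb : BddAbove (Set.range fun x => |φ x * f x|)) :
    ∀ x : ℝ,
      (φ x * |(1 / 2) * ∫ y, Real.sign (x - y) * Real.exp (-|x - y|) * (f y) ^ 2| ≤
        (4 / (1 - θ)) * (⨆ z, |φ z * f z|) * ⨆ z, |f z|) ∧
      (φ x * |(1 / 2) * (∫ y, Real.exp (-|x - y|) * (f y) ^ 2) - (f x) ^ 2| ≤
        (4 / (1 - θ)) * (⨆ z, |φ z * f z|) * ⨆ z, |f z|) := by
  intro x
  set A := ⨆ z, |φ z * f z| with hAdef
  set B := ⨆ z, |f z| with hBdef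
  have hA : ∀ y, |φ y * f y| ≤ A := fun y => le_ciSup hφfb y
  have hB : ∀ y, |f y| ≤ B := fun y => le_ciSup hfb y
  have hA0 : 0 ≤ A := (abs_nonneg _).trans (hA 0)
  have hB0 : 0 ≤ B := (abs_nonneg _).trans (hB 0)
  have ha : 0 < 1 - θ := by linarith
  have hm0 : (0:ℝ) ≤ (m:ℝ) := Nat.cast_nonneg m
  -- closed formula for φ
  have hφeq : ∀ y : ℝ, φ y = Real.exp (θ * min (max y 0) (m:ℝ)) := by
    intro y
    rcases le_or_gt y 0 with h | h
    · rw [hφ₁ y h, max_eq_right h, min_eq_left hm0, mul_zero, Real.exp_zero]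
    · rcases le_or_gt y (m:ℝ) with h2 | h2
      · rw [hφ₂ y h h2, max_eq_left h.le, min_eq_left h2]
      · rw [hφ₃ y h2.le, max_eq_left (le_trans hm0 h2.le), min_eq_right h2.le]
  have hφpos : ∀ y, 0 < φ y := fun y => by rw [hφeq]; exact Real.exp_pos _
  -- pointwise products bounded
  have hfsq : ∀ y, φ y * f y ^ 2 ≤ A * B := by
    intro y
    have h1 : φ y * f y ^ 2 = |φ y * f y| * |f y| := by
      rw [abs_mul, abs_of_pos (hφpos y), ← sq_abs (f y)]; ring
    rw [h1]
    exact mul_le_mul (hA y) (hB y) (abs_nonneg _) hA0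
  -- ratio bound
  have hratio : ∀ y : ℝ, φ x * (Real.exp (-|x - y|) * f y ^ 2)
      ≤ Real.exp (-((1 - θ) * |x - y|)) * (A * B) := by
    intro y
    have hc : |min (max x 0) (m:ℝ) - min (max y 0) (m:ℝ)| ≤ |x - y| := by
      refine (abs_min_sub_min_le_max _ _ _ _).trans ?_
      simp only [sub_self, abs_zero]
      exact max_le (abs_max_sub_max_le_abs _ _ _) (abs_nonneg _)
    have hc2 := (abs_le.1 hc).2
    have h1 : φ x * Real.exp (-|x - y|) ≤ Real.exp (-((1 - θ) * |x - y|)) * φ y := by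
      rw [hφeq x, hφeq y, ← Real.exp_add, ← Real.exp_add]
      apply Real.exp_le_exp.2
      nlinarith [abs_nonneg (x - y), hθ₀.le]
    calc φ x * (Real.exp (-|x - y|) * f y ^ 2)
        = (φ x * Real.exp (-|x - y|)) * f y ^ 2 := by ring
      _ ≤ (Real.exp (-((1 - θ) * |x - y|)) * φ y) * f y ^ 2 :=
          mul_le_mul_of_nonneg_right h1 (sq_nonneg _)
      _ = Real.exp (-((1 - θ) * |x - y|)) * (φ y * f y ^ 2) := by ring
      _ ≤ _ := mul_le_mul_of_nonneg_left (hfsq y) (Real.exp_pos _).le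
  -- integrability
  have hExp : ∀ a : ℝ, 0 < a → Integrable (fun y : ℝ => Real.exp (-(a * |x - y|))) :=
    fun a haa => integrable_exp_neg_mul_abs_sub' haa x
  have hExp1 : Integrable (fun y : ℝ => Real.exp (-|x - y|)) := by
    have := hExp 1 one_pos
    simpa using this
  have hmeas : AEStronglyMeasurable (fun y : ℝ => Real.exp (-|x - y|) * f y ^ 2) volume := by
    apply Measurable.aestronglyMeasurable
    exact (((measurable_const.sub measurable_id).abs.neg).exp).mul (hfm.pow_const 2)
  have hint : Integrable (fun y : ℝ => Real.exp (-|x - y|) * f y ^ 2) := by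
    refine (hExp1.mul_const (B ^ 2)).mono' hmeas (Filter.Eventually.of_forall fun y => ?_)
    rw [Real.norm_eq_abs, abs_mul, abs_of_pos (Real.exp_pos _), abs_pow, sq_abs]
    apply mul_le_mul_of_nonneg_left _ (Real.exp_pos _).le
    rw [← sq_abs]
    exact pow_le_pow_left₀ (abs_nonneg _) (hB y) 2
  have hint2 : Integrable
      (fun y : ℝ => Real.sign (x - y) * Real.exp (-|x - y|) * f y ^ 2) := by
    refine hint.mono' ?_ (Filter.Eventually.of_forall fun y => ?_)
    · apply Measurable.aestronglyMeasurable
      exact ((sign_measurable'.comp (measurable_const.sub measurable_id)).mul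
        ((measurable_const.sub measurable_id).abs.neg.exp)).mul (hfm.pow_const 2)
    · rw [Real.norm_eq_abs, abs_mul, abs_mul, abs_of_pos (Real.exp_pos _), abs_pow, sq_abs]
      calc |Real.sign (x - y)| * Real.exp (-|x - y|) * f y ^ 2
          ≤ 1 * Real.exp (-|x - y|) * f y ^ 2 := by
            apply mul_le_mul_of_nonneg_right
              (mul_le_mul_of_nonneg_right (abs_sign_le_one' _) (Real.exp_pos _).le)
              (sq_nonneg _)
        _ = Real.exp (-|x - y|) * f y ^ 2 := by ring
  -- nonnegativity of the convolution integral
  have hIpos : 0 ≤ ∫ y, Real.exp (-|x - y|) * f y ^ 2 :=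
    integral_nonneg fun y => mul_nonneg (Real.exp_pos _).le (sq_nonneg _)
  -- key estimate
  have key : φ x * ∫ y, Real.exp (-|x - y|) * f y ^ 2 ≤ 2 / (1 - θ) * (A * B) := by
    rw [← integral_const_mul]
    calc ∫ y, φ x * (Real.exp (-|x - y|) * f y ^ 2)
        ≤ ∫ y, Real.exp (-((1 - θ) * |x - y|)) * (A * B) := by
          exact integral_mono (hint.const_mul _) ((hExp _ ha).mul_const _) hratio
      _ = 2 / (1 - θ) * (A * B) := by
          rw [integral_mul_const, integral_exp_neg_mul_abs_sub' ha x]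
  have hφx0 : 0 ≤ φ x := (hφpos x).le
  have hAB : 0 ≤ A * B := mul_nonneg hA0 hB0
  constructor
  · -- part (i)
    have h1 : |∫ y, Real.sign (x - y) * Real.exp (-|x - y|) * f y ^ 2|
        ≤ ∫ y, Real.exp (-|x - y|) * f y ^ 2 := by
      calc |∫ y, Real.sign (x - y) * Real.exp (-|x - y|) * f y ^ 2|
          ≤ ∫ y, |Real.sign (x - y) * Real.exp (-|x - y|) * f y ^ 2| := by
            simpa only [Real.norm_eq_abs] using
              norm_integral_le_integral_norm
                (fun y : ℝ => Real.sign (x - y) * Real.exp (-|x - y|) * f y ^ 2)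
        _ ≤ ∫ y, Real.exp (-|x - y|) * f y ^ 2 := by
            refine integral_mono hint2.abs hint fun y => ?_
            rw [abs_mul, abs_mul, abs_of_pos (Real.exp_pos _), abs_pow, sq_abs]
            calc |Real.sign (x - y)| * Real.exp (-|x - y|) * f y ^ 2
                ≤ 1 * Real.exp (-|x - y|) * f y ^ 2 :=
                  mul_le_mul_of_nonneg_right
                    (mul_le_mul_of_nonneg_right (abs_sign_le_one' _) (Real.exp_pos _).le)
                    (sq_nonneg _)
              _ = Real.exp (-|x - y|) * f y ^ 2 := by ring
    have h2 : φ x * |(1 / 2 : ℝ) * ∫ y, Real.sign (x - y) * Real.exp (-|x - y|) * f y ^ 2|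
        ≤ (1 / 2) * (φ x * ∫ y, Real.exp (-|x - y|) * f y ^ 2) := by
      rw [abs_mul, abs_of_pos (by norm_num : (0:ℝ) < 1/2)]
      calc φ x * ((1/2) * |∫ y, Real.sign (x - y) * Real.exp (-|x - y|) * f y ^ 2|)
          ≤ φ x * ((1/2) * ∫ y, Real.exp (-|x - y|) * f y ^ 2) := by
            apply mul_le_mul_of_nonneg_left _ hφx0
            exact mul_le_mul_of_nonneg_left h1 (by norm_num)
        _ = (1/2) * (φ x * ∫ y, Real.exp (-|x - y|) * f y ^ 2) := by ring
    have h3 : (1 / 2 : ℝ) * (φ x * ∫ y, Real.exp (-|x - y|) * f y ^ 2)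
        ≤ 1 / (1 - θ) * (A * B) := by
      have := mul_le_mul_of_nonneg_left key (by norm_num : (0:ℝ) ≤ 1/2)
      calc (1/2 : ℝ) * (φ x * ∫ y, Real.exp (-|x - y|) * f y ^ 2)
          ≤ (1/2) * (2 / (1 - θ) * (A * B)) := this
        _ = 1 / (1 - θ) * (A * B) := by field_simp
    refine (h2.trans h3).trans ?_
    rw [mul_assoc]
    apply mul_le_mul_of_nonneg_right _ hAB
    rw [div_le_div_iff₀ ha ha]
    nlinarith
  · -- part (ii)
    have h1 : |(1 / 2 : ℝ) * (∫ y, Real.exp (-|x - y|) * f y ^ 2) - f x ^ 2|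
        ≤ (1 / 2) * (∫ y, Real.exp (-|x - y|) * f y ^ 2) + f x ^ 2 := by
      refine (abs_sub _ _).trans ?_
      rw [abs_of_nonneg (by positivity : (0:ℝ) ≤ (1/2) * ∫ y, Real.exp (-|x - y|) * f y ^ 2),
        abs_of_nonneg (sq_nonneg _)]
    have h2 : φ x * |(1 / 2 : ℝ) * (∫ y, Real.exp (-|x - y|) * f y ^ 2) - f x ^ 2|
        ≤ (1/2) * (φ x * ∫ y, Real.exp (-|x - y|) * f y ^ 2) + φ x * f x ^ 2 := by
      calc φ x * |(1 / 2 : ℝ) * (∫ y, Real.exp (-|x - y|) * f y ^ 2) - f x ^ 2|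
          ≤ φ x * ((1/2) * (∫ y, Real.exp (-|x - y|) * f y ^ 2) + f x ^ 2) :=
            mul_le_mul_of_nonneg_left h1 hφx0
        _ = (1/2) * (φ x * ∫ y, Real.exp (-|x - y|) * f y ^ 2) + φ x * f x ^ 2 := by ring
    refine h2.trans ?_
    have h3 : (1/2 : ℝ) * (φ x * ∫ y, Real.exp (-|x - y|) * f y ^ 2)
        ≤ 1 / (1 - θ) * (A * B) := by
      have := mul_le_mul_of_nonneg_left key (by norm_num : (0:ℝ) ≤ 1/2)
      calc (1/2 : ℝ) * (φ x * ∫ y, Real.exp (-|x - y|) * f y ^ 2)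
          ≤ (1/2) * (2 / (1 - θ) * (A * B)) := this
        _ = 1 / (1 - θ) * (A * B) := by field_simp
    have h4 := hfsq x
    have h5 : 1 / (1 - θ) * (A * B) + A * B ≤ 4 / (1 - θ) * A * B := by
      rw [mul_assoc]
      have : (1 / (1 - θ) + 1) ≤ 4 / (1 - θ) := by
        rw [div_add' _ _ _ ha.ne', div_le_div_iff₀ ha ha]
        nlinarith
      nlinarith
    linarith
end
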